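/- arXiv:2603.02400 — 4 statements merged into one kernel-verified Lean document; each statement's English description precedes it below -/
import Mathlib

section
/- Let T be a bidirected tree rooted at a vertex z, and let r and r' be two converging requests in T. Then r and r' interfere if and only if the penultimate vertices t_r^- and t_{r'}^- are related. -/
open SimpleGraph

/-- A request in a bidirected tree `T`: a directed path of length at least 1,
encoded as a path (walk without vertex repetition) in the underlying tree. -/
structure Request {V : Type*} (T : SimpleGraph V) where
  s : V
  t : V
  toWalk : T.Walk s t
  isPath : toWalk.IsPath
  one_le_length : 1 ≤ toWalk.length

namespace Request

variable {V : Type*} {T : SimpleGraph V}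

/-- The second vertex `s_r⁺` of a request. -/
def sPlus (r : Request T) : V := r.toWalk.getVert 1

/-- The penultimate vertex `t_r⁻` of a request. -/
def tMinus (r : Request T) : V := r.toWalk.getVert (r.toWalk.length - 1)

end Request

variable {V : Type*}

/-- `r` interferes on `r'` if the unique path from `s_r` to `t_{r'}` in the tree `T`
has first arc the emission arc of `r` and last arc the reception arc of `r'`. -/
def InterferesOn (T : SimpleGraph V) (r r' : Request T) : Prop :=
  ∃ p : T.Walk r.s r'.t, p.IsPath ∧ 1 ≤ p.length ∧
    p.getVert 1 = r.sPlus ∧ p.getVert (p.length - 1) = r'.tMinus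

/-- Two requests interfere if one of them interferes on the other. -/
def Interfere (T : SimpleGraph V) (r r' : Request T) : Prop :=
  InterferesOn T r r' ∨ InterferesOn T r' r

/-- `x` is an ancestor of `y` in the tree `T` rooted at `z`:
`x` lies on the unique path from `z` to `y`. -/
def Ancestor (T : SimpleGraph V) (z x y : V) : Prop :=
  ∃ p : T.Walk z y, p.IsPath ∧ x ∈ p.support

/-- Two vertices are related if one is an ancestor of the other. -/
def Related (T : SimpleGraph V) (z x y : V) : Prop :=
  Ancestor T z x y ∨ Ancestor T z y x

/-- A request is converging (w.r.t. root `z`) if all its arcs are directed towards `z`,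
i.e. the head of every arc is an ancestor of its tail. -/
def Converging (T : SimpleGraph V) (z : V) (r : Request T) : Prop :=
  ∀ i < r.toWalk.length, Ancestor T z (r.toWalk.getVert (i+1)) (r.toWalk.getVert i)

/-- A request is diverging (w.r.t. root `z`) if all its arcs are directed away from `z`,
i.e. the tail of every arc is an ancestor of its head. -/
def Diverging (T : SimpleGraph V) (z : V) (r : Request T) : Prop :=
  ∀ i < r.toWalk.length, Ancestor T z (r.toWalk.getVert i) (r.toWalk.getVert (i+1))

/-- A request is unimodal (w.r.t. root `z`) if it is neither converging nor diverging. -/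
def Unimodal (T : SimpleGraph V) (z : V) (r : Request T) : Prop :=
  ¬ Converging T z r ∧ ¬ Diverging T z r

/-- `m` is the middle of the request `r` (w.r.t. root `z`): the vertex of `r`
closest to the root, i.e. the vertex of `r` which is an ancestor of every vertex of `r`. -/
def IsMiddle (T : SimpleGraph V) (z : V) (r : Request T) (m : V) : Prop :=
  m ∈ r.toWalk.support ∧ ∀ y ∈ r.toWalk.support, Ancestor T z m y

/-- The interference graph of a family of requests: two (indices of) requests are
adjacent iff they are distinct and the requests interfere. -/
def interferenceGraph (T : SimpleGraph V) {ι : Type*} (f : ι → Request T) :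
    SimpleGraph ι where
  Adj i j := i ≠ j ∧ Interfere T (f i) (f j)
  symm := by
    constructor
    intro i j h
    exact ⟨h.1.symm, h.2.symm⟩
  loopless := by
    constructor
    intro i h
    exact h.1 rfl

/-- The interference graph of a set of requests. -/
def interGraph (T : SimpleGraph V) (R : Set (Request T)) : SimpleGraph ↥R :=
  interferenceGraph T (fun r => (r : Request T))

/-- The pair `(a, b)` is an arc joining two consecutive vertices of the
bidirected path corresponding to the walk `p` (in either direction). -/
def ArcOn (T : SimpleGraph V) {u v : V} (p : T.Walk u v) (a b : V) : Prop :=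
  ∃ j < p.length, (p.getVert j = a ∧ p.getVert (j+1) = b) ∨
    (p.getVert j = b ∧ p.getVert (j+1) = a)

/-- The request `r` shares an arc with the bidirected path corresponding to
the walk `p`. -/
def SharesArc (T : SimpleGraph V) {u v : V} (p : T.Walk u v) (r : Request T) : Prop :=
  ∃ i < r.toWalk.length, ArcOn T p (r.toWalk.getVert i) (r.toWalk.getVert (i+1))

/-- A leaf of a tree: a vertex with at most one neighbour. -/
def IsLeaf (T : SimpleGraph V) (y : V) : Prop :=
  {w | T.Adj y w}.Subsingleton

/-- A comparability graph: there is a partial order on the vertices such that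
two distinct vertices are adjacent iff they are comparable. -/
def IsComparabilityGraph {α : Type*} (G : SimpleGraph α) : Prop :=
  ∃ le : α → α → Prop, IsPartialOrder α le ∧ ∀ a b, G.Adj a b ↔ a ≠ b ∧ (le a b ∨ le b a)

/-- A cobipartite graph: the vertex set can be partitioned into two cliques. -/
def IsCobipartite {α : Type*} (G : SimpleGraph α) : Prop :=
  ∃ A : Set α, G.IsClique A ∧ G.IsClique Aᶜ

section AuxLemmas

namespace TreeAux

open SimpleGraph

variable {V : Type*} {T : SimpleGraph V}

lemma path_eq (hA : T.IsAcyclic) {u v : V} {p q : T.Walk u v} (hp : p.IsPath) (hq : q.IsPath) :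
    p = q :=
  congrArg Subtype.val (hA.path_unique ⟨p, hp⟩ ⟨q, hq⟩)

lemma exists_path (hC : T.Connected) (u v : V) : ∃ p : T.Walk u v, p.IsPath := by
  classical
  obtain ⟨w⟩ := hC.preconnected u v
  exact ⟨w.bypass, w.bypass_isPath⟩

lemma isPath_append_left {u v w : V} {p : T.Walk u v} {q : T.Walk v w}
    (h : (p.append q).IsPath) : p.IsPath := by
  classical
  rw [Walk.isPath_def] at h ⊢
  rw [Walk.support_append] at h
  exact (List.sublist_append_left _ _).nodup h

lemma ancestor_refl (hC : T.Connected) (z x : V) : Ancestor T z x x := by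
  classical
  obtain ⟨p, hp⟩ := exists_path hC z x
  exact ⟨p, hp, p.end_mem_support⟩

lemma mem_of_ancestor (hT : T.IsTree) {z x y : V} (h : Ancestor T z x y)
    {p : T.Walk z y} (hp : p.IsPath) : x ∈ p.support := by
  classical
  obtain ⟨q, hq, hx⟩ := h
  rwa [path_eq hT.2 hp hq]

lemma ancestor_trans (hT : T.IsTree) {z x y w : V} (h1 : Ancestor T z x y)
    (h2 : Ancestor T z y w) : Ancestor T z x w := by
  classical
  obtain ⟨p, hp, hyp⟩ := h2
  have hx : x ∈ (p.takeUntil y hyp).support :=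
    mem_of_ancestor hT h1 (hp.takeUntil hyp)
  exact ⟨p, hp, Walk.support_takeUntil_subset _ hyp hx⟩

lemma ancestor_antisymm (hT : T.IsTree) {z x y : V} (hxy : Ancestor T z x y)
    (hyx : Ancestor T z y x) : x = y := by
  classical
  obtain ⟨p, hp, hxp⟩ := hxy
  have h1 : (p.takeUntil x hxp).IsPath := hp.takeUntil hxp
  have hy1 : y ∈ (p.takeUntil x hxp).support := mem_of_ancestor hT hyx h1
  have h2 : ((p.takeUntil x hxp).takeUntil y hy1).IsPath := h1.takeUntil hy1
  have heq : (p.takeUntil x hxp).takeUntil y hy1 = p := path_eq hT.2 h2 hp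
  have l1 := Walk.length_takeUntil_le (p.takeUntil x hxp) hy1
  have l3 : p.length = ((p.takeUntil x hxp).takeUntil y hy1).length := by rw [heq]
  have l4 := congrArg Walk.length (p.take_spec hxp)
  rw [Walk.length_append] at l4
  have h0 : (p.dropUntil x hxp).length = 0 := by omega
  exact Walk.eq_of_length_eq_zero h0

lemma related_of_common (hT : T.IsTree) {z x y u : V} (hx : Ancestor T z x u)
    (hy : Ancestor T z y u) : Related T z x y := by
  classical
  obtain ⟨Q, hQ⟩ := exists_path hT.isConnected z u
  have hxm := mem_of_ancestor hT hx hQ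
  have hym := mem_of_ancestor hT hy hQ
  rw [← Q.take_spec hxm, Walk.mem_support_append_iff] at hym
  cases hym with
  | inl h => exact Or.inr ⟨Q.takeUntil x hxm, hQ.takeUntil hxm, h⟩
  | inr h =>
    refine Or.inl ⟨(Q.takeUntil x hxm).append ((Q.dropUntil x hxm).takeUntil y h), ?_, ?_⟩
    · apply isPath_append_left (q := (Q.dropUntil x hxm).dropUntil y h)
      have heq : (((Q.takeUntil x hxm).append ((Q.dropUntil x hxm).takeUntil y h)).append
          ((Q.dropUntil x hxm).dropUntil y h)) = Q := by
        rw [← Walk.append_assoc, Walk.take_spec, Walk.take_spec]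
      rw [heq]; exact hQ
    · rw [Walk.mem_support_append_iff]
      exact Or.inl (Walk.end_mem_support _)

lemma between (hT : T.IsTree) {z a b c : V} (hab : Ancestor T z a b) (hbc : Ancestor T z b c)
    {R : T.Walk a c} (hR : R.IsPath) : b ∈ R.support := by
  classical
  obtain ⟨Qc, hQc⟩ := exists_path hT.isConnected z c
  have hb : b ∈ Qc.support := mem_of_ancestor hT hbc hQc
  have ha : a ∈ Qc.support := mem_of_ancestor hT (ancestor_trans hT hab hbc) hQc
  have hReq : R = Qc.dropUntil a ha := path_eq hT.2 hR (hQc.dropUntil ha)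
  rw [← Qc.take_spec ha, Walk.mem_support_append_iff] at hb
  cases hb with
  | inr h => rw [hReq]; exact h
  | inl h =>
    have hba : Ancestor T z b a := ⟨Qc.takeUntil a ha, hQc.takeUntil ha, h⟩
    have hba' : a = b := ancestor_antisymm hT hab hba
    rw [hReq, ← hba']
    exact Walk.start_mem_support _

lemma mem_support_cases (hT : T.IsTree) (z : V) {u v x : V} {p : T.Walk u v} (hp : p.IsPath)
    (hx : x ∈ p.support) : Ancestor T z x u ∨ Ancestor T z x v := by
  classical
  obtain ⟨q1, hq1⟩ := exists_path hT.isConnected u z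
  obtain ⟨q2, hq2⟩ := exists_path hT.isConnected z v
  have hbp : (q1.append q2).bypass.IsPath := Walk.bypass_isPath _
  have heq : p = (q1.append q2).bypass := path_eq hT.2 hp hbp
  rw [heq] at hx
  have hx' : x ∈ (q1.append q2).support := Walk.support_bypass_subset _ hx
  rw [Walk.mem_support_append_iff] at hx'
  cases hx' with
  | inl h =>
    exact Or.inl ⟨q1.reverse, hq1.reverse, by rw [Walk.support_reverse]; simpa using h⟩
  | inr h => exact Or.inr ⟨q2, hq2, h⟩

lemma second_vertex (hA : T.IsAcyclic) {a b x : V} {R : T.Walk a b} (hR : R.IsPath)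
    (hx : x ∈ R.support) (hax : T.Adj a x) : R.getVert 1 = x := by
  classical
  have hE : (Walk.cons hax Walk.nil).IsPath := by
    simp [Walk.isPath_def, hax.ne]
  have heq : R.takeUntil x hx = Walk.cons hax Walk.nil :=
    path_eq hA (hR.takeUntil hx) hE
  conv_lhs => rw [← R.take_spec hx, heq]
  simp [Walk.cons_append, Walk.nil_append, Walk.getVert_cons_succ]

lemma converging_chain (hT : T.IsTree) {z : V} {r : Request T} (hr : Converging T z r) :
    ∀ d i, i + d ≤ r.toWalk.length →
      Ancestor T z (r.toWalk.getVert (i + d)) (r.toWalk.getVert i) := by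
  classical
  intro d
  induction d with
  | zero => intro i _; exact ancestor_refl hT.isConnected z _
  | succ d ih =>
    intro i h
    have h1 := hr (i + d) (by omega)
    have h2 := ih i (by omega)
    exact ancestor_trans hT (show Ancestor T z (r.toWalk.getVert (i + (d+1)))
      (r.toWalk.getVert (i + d)) from by rw [show i + (d+1) = i + d + 1 by omega]; exact h1) h2

lemma last_arc {z : V} {r : Request T} (hr : Converging T z r) :
    Ancestor T z r.t r.tMinus ∧ T.Adj r.tMinus r.t := by
  classical
  have h1 := r.one_le_length
  have h2 := hr (r.toWalk.length - 1) (by omega)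
  have h3 := r.toWalk.adj_getVert_succ (i := r.toWalk.length - 1) (by omega)
  rw [Nat.sub_add_cancel h1, Walk.getVert_length] at h2 h3
  exact ⟨h2, h3⟩

lemma first_arc {z : V} {r : Request T} (hr : Converging T z r) :
    Ancestor T z r.sPlus r.s ∧ T.Adj r.s r.sPlus := by
  classical
  have h1 := r.one_le_length
  have h2 := hr 0 (by omega)
  have h3 := r.toWalk.adj_getVert_succ (i := 0) (by omega)
  rw [Walk.getVert_zero] at h2 h3
  exact ⟨h2, h3⟩

lemma tMinus_ancestor_s (hT : T.IsTree) {z : V} {r : Request T} (hr : Converging T z r) :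
    Ancestor T z r.tMinus r.s := by
  classical
  have h1 := r.one_le_length
  have := converging_chain hT hr (r.toWalk.length - 1) 0 (by omega)
  rw [Nat.zero_add, Walk.getVert_zero] at this
  exact this

lemma interferesOn_related (hT : T.IsTree) {z : V} {r r' : Request T}
    (hr : Converging T z r) (hr' : Converging T z r')
    (h : InterferesOn T r r') : Related T z r.tMinus r'.tMinus := by
  classical
  obtain ⟨p, hp, hlen, _, hpen⟩ := h
  have hmem : r'.tMinus ∈ p.support := by
    rw [Walk.mem_support_iff_exists_getVert]
    exact ⟨p.length - 1, hpen, by omega⟩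
  have hcases := mem_support_cases hT z hp hmem
  have hanc : Ancestor T z r'.tMinus r.s := by
    cases hcases with
    | inl h => exact h
    | inr h =>
      exfalso
      obtain ⟨ht'anc, ht'adj⟩ := last_arc (T := T) hr'
      exact ht'adj.ne (ancestor_antisymm hT h ht'anc)
  exact related_of_common hT (tMinus_ancestor_s hT hr) hanc

lemma interferesOn_of_ancestor (hT : T.IsTree) {z : V} {r r' : Request T}
    (hr : Converging T z r) (hr' : Converging T z r')
    (h : Ancestor T z r'.tMinus r.tMinus) : InterferesOn T r r' := by
  classical
  obtain ⟨ht'anc, ht'adj⟩ := last_arc (T := T) hr'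
  obtain ⟨hsanc, hsadj⟩ := first_arc (T := T) hr
  have A1 : Ancestor T z r.tMinus r.s := tMinus_ancestor_s hT hr
  have A2 : Ancestor T z r'.tMinus r.s := ancestor_trans hT h A1
  have A2' : Ancestor T z r'.t r.s := ancestor_trans hT ht'anc A2
  have hneq : r.s ≠ r'.t := by
    intro e
    rw [e] at A2
    exact ht'adj.ne (ancestor_antisymm hT A2 ht'anc)
  obtain ⟨Q, hQ⟩ := exists_path hT.isConnected z r.s
  have ht'Q : r'.t ∈ Q.support := mem_of_ancestor hT A2' hQ
  have hdp : (Q.dropUntil r'.t ht'Q).IsPath := hQ.dropUntil ht'Q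
  refine ⟨(Q.dropUntil r'.t ht'Q).reverse, hdp.reverse, ?_, ?_, ?_⟩
  · have h0 : (Q.dropUntil r'.t ht'Q).reverse.length ≠ 0 :=
      fun h0 => hneq (Walk.eq_of_length_eq_zero h0)
    omega
  · -- getVert 1 = r.sPlus
    have hsup : r.sPlus ∈ (Q.dropUntil r'.t ht'Q).reverse.support := by
      cases related_of_common hT A2' hsanc with
      | inl hts =>
        have hmem := between hT hts hsanc (R := Q.dropUntil r'.t ht'Q) hdp
        rw [Walk.support_reverse, List.mem_reverse]
        exact hmem
      | inr hst =>
        have hE : (Walk.cons hsadj.symm (Walk.nil : T.Walk r.s r.s)).IsPath := by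
          simp [Walk.isPath_def, hsadj.ne']
        have hmem := between hT hst A2' hE
        simp only [Walk.support_cons, Walk.support_nil, List.mem_cons,
          List.not_mem_nil, or_false] at hmem
        rcases hmem with h1 | h2
        · rw [← h1]
          exact Walk.end_mem_support _
        · exact absurd h2.symm hneq
    exact second_vertex hT.2 hdp.reverse hsup hsadj
  · -- penultimate = r'.tMinus
    have hsup : r'.tMinus ∈ (Q.dropUntil r'.t ht'Q).reverse.reverse.support := by
      rw [Walk.support_reverse, Walk.support_reverse, List.reverse_reverse]
      exact between hT ht'anc A2 hdp
    have h2v := second_vertex hT.2 hdp.reverse.reverse hsup ht'adj.symm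
    rwa [Walk.getVert_reverse] at h2v

end TreeAux

end AuxLemmas

/-- Lemma 1(i): two converging requests interfere iff their penultimate
vertices are related. -/
theorem converging_interfere_iff {V : Type*} (T : SimpleGraph V) (hT : T.IsTree)
    (z : V) (r r' : Request T)
    (hr : Converging T z r) (hr' : Converging T z r') :
    Interfere T r r' ↔ Related T z r.tMinus r'.tMinus := by
  constructor
  · rintro (h | h)
    · exact TreeAux.interferesOn_related hT hr hr' h
    · exact (TreeAux.interferesOn_related hT hr' hr h).symm
  · rintro (h | h)
    · exact Or.inr (TreeAux.interferesOn_of_ancestor hT hr' hr h)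
    · exact Or.inl (TreeAux.interferesOn_of_ancestor hT hr hr' h)
end

section
/- Let T be a bidirected tree rooted at a vertex z, and let r and r' be two unimodal requests in T. Then r and r' do not interfere if and only if m_r = m_{r'}, s_r and t_{r'} are related, and s_{r'} and t_r are related. -/
open SimpleGraph

variable {V : Type*}

namespace BidirTree
open Walk
variable {V : Type*} {T : SimpleGraph V}

lemma exists_prefix {u v : V} (p : T.Walk u v) (hp : p.IsPath) :
    ∀ j, j ≤ p.length → ∃ q : T.Walk u (p.getVert j), q.IsPath ∧ q.length = j ∧
      (∀ i, i ≤ j → q.getVert i = p.getVert i) ∧ ∀ x ∈ q.support, x ∈ p.support := by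
  induction p with
  | nil =>
    intro j hj
    have hj0 : j = 0 := by simpa using hj
    subst hj0
    exact ⟨Walk.nil, by simp, by simp, by simp, by simp⟩
  | @cons u w v h p' ih =>
    intro j hj
    match j with
    | 0 =>
      refine ⟨Walk.nil.copy rfl (Walk.getVert_zero _).symm, by simp, by simp, fun i hi => ?_, by simp⟩
      have : i = 0 := by omega
      subst this; simp
    | (k+1) =>
      have hk : k ≤ p'.length := by simpa [Walk.length_cons] using hj
      obtain ⟨q', hq'path, hq'len, hq'gv, hq'supp⟩ := ih hp.of_cons k hk
      have hty : (Walk.cons h p').getVert (k+1) = p'.getVert k := Walk.getVert_cons_succ p' h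
      refine ⟨(Walk.cons h q').copy rfl hty.symm, ?_, ?_, ?_, ?_⟩
      · rw [Walk.isPath_copy, Walk.cons_isPath_iff]
        refine ⟨hq'path, fun hu => ?_⟩
        exact ((Walk.cons_isPath_iff h p').mp hp).2 (hq'supp u hu)
      · simp [hq'len]
      · intro i hi
        match i with
        | 0 => simp
        | (i'+1) =>
          have hle : i' ≤ k := by omega
          simp only [Walk.getVert_copy, Walk.getVert_cons_succ]
          exact hq'gv i' hle
      · intro x hx
        rw [Walk.support_copy, Walk.support_cons, List.mem_cons] at hx
        rw [Walk.support_cons, List.mem_cons]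
        rcases hx with hx | hx
        · exact Or.inl hx
        · exact Or.inr (hq'supp x hx)

lemma exists_suffix {u v : V} (p : T.Walk u v) (hp : p.IsPath) :
    ∀ j, j ≤ p.length → ∃ q : T.Walk (p.getVert j) v, q.IsPath ∧ q.length = p.length - j ∧
      (∀ i, q.getVert i = p.getVert (j + i)) ∧ ∀ x ∈ q.support, x ∈ p.support := by
  induction p with
  | nil =>
    intro j hj
    have hj0 : j = 0 := by simpa using hj
    subst hj0
    exact ⟨Walk.nil, by simp, by simp, by simp, by simp⟩
  | @cons u w v h p' ih =>
    intro j hj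
    match j with
    | 0 =>
      refine ⟨(Walk.cons h p').copy (Walk.getVert_zero _).symm rfl, by simpa using hp, by simp, fun i => by simp, by simp⟩
    | (k+1) =>
      have hk : k ≤ p'.length := by simpa [Walk.length_cons] using hj
      obtain ⟨q', hq'path, hq'len, hq'gv, hq'supp⟩ := ih hp.of_cons k hk
      have hty : (Walk.cons h p').getVert (k+1) = p'.getVert k := Walk.getVert_cons_succ p' h
      refine ⟨q'.copy hty.symm rfl, by simpa using hq'path, ?_, fun i => ?_, fun x hx => ?_⟩
      · simp [hq'len, Walk.length_cons]
      · rw [Walk.getVert_copy]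
        have : k + 1 + i = (k + i) + 1 := by omega
        rw [this, Walk.getVert_cons_succ]
        exact hq'gv i
      · rw [Walk.support_copy] at hx
        rw [Walk.support_cons, List.mem_cons]
        exact Or.inr (hq'supp x hx)

lemma getVert_inj {u v : V} {p : T.Walk u v} (hp : p.IsPath) :
    ∀ {i j}, i ≤ p.length → j ≤ p.length → p.getVert i = p.getVert j → i = j := by
  induction p with
  | nil => intro i j hi hj _; simp only [Walk.length_nil, Nat.le_zero] at hi hj; omega
  | @cons u w v h p' ih =>
    intro i j hi hj hij
    match i, j with
    | 0, 0 => rfl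
    | 0, (j'+1) =>
      exfalso
      rw [Walk.getVert_zero, Walk.getVert_cons_succ] at hij
      have : u ∈ p'.support := Walk.mem_support_iff_exists_getVert.mpr ⟨j', hij.symm, by simpa [Walk.length_cons] using hj⟩
      exact ((Walk.cons_isPath_iff h p').mp hp).2 this
    | (i'+1), 0 =>
      exfalso
      rw [Walk.getVert_zero, Walk.getVert_cons_succ] at hij
      have : u ∈ p'.support := Walk.mem_support_iff_exists_getVert.mpr ⟨i', hij, by simpa [Walk.length_cons] using hi⟩
      exact ((Walk.cons_isPath_iff h p').mp hp).2 this
    | (i'+1), (j'+1) =>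
      rw [Walk.getVert_cons_succ, Walk.getVert_cons_succ] at hij
      have := ih hp.of_cons (by simpa [Walk.length_cons] using hi) (by simpa [Walk.length_cons] using hj) hij
      omega


variable (hT : T.IsTree) (z : V)
include hT
set_option linter.unusedSectionVars false

lemma exists_path (u v : V) : ∃ p : T.Walk u v, p.IsPath := by
  classical
  obtain ⟨w⟩ := hT.isConnected.preconnected u v
  exact ⟨w.toPath.1, w.toPath.2⟩

lemma path_eq {u v : V} {p q : T.Walk u v} (hp : p.IsPath) (hq : q.IsPath) : p = q :=
  ((hT.existsUnique_path u v).unique hp hq)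

lemma anc_iff {x y : V} {p : T.Walk z y} (hp : p.IsPath) :
    Ancestor T z x y ↔ x ∈ p.support := by
  constructor
  · rintro ⟨q, hq, hx⟩
    rwa [path_eq hT hq hp] at hx
  · intro h
    exact ⟨p, hp, h⟩

lemma anc_of_le {y : V} {p : T.Walk z y} (hp : p.IsPath) {i j : ℕ}
    (hij : i ≤ j) (hj : j ≤ p.length) : Ancestor T z (p.getVert i) (p.getVert j) := by
  obtain ⟨q, hq, hqlen, hqgv, _⟩ := exists_prefix p hp j hj
  exact ⟨q, hq, Walk.mem_support_iff_exists_getVert.mpr ⟨i, hqgv i hij, by omega⟩⟩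

lemma anc_refl (y : V) : Ancestor T z y y := by
  obtain ⟨p, hp⟩ := exists_path hT z y
  exact ⟨p, hp, Walk.end_mem_support p⟩

lemma anc_trans {w x y : V} (h1 : Ancestor T z w x) (h2 : Ancestor T z x y) :
    Ancestor T z w y := by
  obtain ⟨p, hp, hx⟩ := h2
  obtain ⟨j, hj, hjle⟩ := Walk.mem_support_iff_exists_getVert.mp hx
  subst hj
  obtain ⟨q, hq, _, _, hqsupp⟩ := exists_prefix p hp j hjle
  exact ⟨p, hp, hqsupp w ((anc_iff hT z hq).mp h1)⟩

lemma anc_antisymm {x y : V} (h1 : Ancestor T z x y) (h2 : Ancestor T z y x) : x = y := by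
  obtain ⟨p, hp, hx⟩ := h1
  obtain ⟨j, hj, hjle⟩ := Walk.mem_support_iff_exists_getVert.mp hx
  subst hj
  obtain ⟨q, hq, hqlen, hqgv, _⟩ := exists_prefix p hp j hjle
  have hy : y ∈ q.support := (anc_iff hT z hq).mp h2
  obtain ⟨i, hi, hile⟩ := Walk.mem_support_iff_exists_getVert.mp hy
  rw [hqgv i (by omega)] at hi
  have : p.getVert p.length = y := Walk.getVert_length p
  have hij : i = p.length := getVert_inj hp (by omega) le_rfl (hi.trans this.symm)
  have : j = p.length := by omega
  rw [this, Walk.getVert_length]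

lemma anc_comparable {x x' y : V} (h1 : Ancestor T z x y) (h2 : Ancestor T z x' y) :
    Ancestor T z x x' ∨ Ancestor T z x' x := by
  obtain ⟨p, hp, hx⟩ := h1
  have hx' : x' ∈ p.support := (anc_iff hT z hp).mp h2
  obtain ⟨i, hi, hile⟩ := Walk.mem_support_iff_exists_getVert.mp hx
  obtain ⟨j, hj, hjle⟩ := Walk.mem_support_iff_exists_getVert.mp hx'
  subst hi; subst hj
  rcases le_total i j with h | h
  · exact Or.inl (anc_of_le hT z hp h hjle)
  · exact Or.inr (anc_of_le hT z hp h hile)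

lemma adj_related {x y : V} (h : T.Adj x y) : Ancestor T z x y ∨ Ancestor T z y x := by
  obtain ⟨q, hq⟩ := exists_path hT z x
  by_cases hy : y ∈ q.support
  · exact Or.inr ⟨q, hq, hy⟩
  · left
    refine ⟨(Walk.cons h.symm q.reverse).reverse, ?_, ?_⟩
    · rw [Walk.isPath_reverse_iff, Walk.cons_isPath_iff]
      exact ⟨hq.reverse, by rwa [Walk.support_reverse, List.mem_reverse]⟩
    · rw [Walk.support_reverse, List.mem_reverse, Walk.support_cons]
      exact List.mem_cons_of_mem _ (by rw [Walk.support_reverse, List.mem_reverse]; exact Walk.end_mem_support q)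

lemma penult {x y : V} (hxy : T.Adj x y) (hxA : Ancestor T z x y)
    {p : T.Walk z y} (hp : p.IsPath) : 1 ≤ p.length ∧ p.getVert (p.length - 1) = x := by
  obtain ⟨q, hq⟩ := exists_path hT z x
  have hy : y ∉ q.support := by
    intro hy
    exact hxy.ne (anc_antisymm hT z hxA ⟨q, hq, hy⟩)
  set C : T.Walk y z := Walk.cons hxy.symm q.reverse with hC
  have hCpath : C.IsPath := by
    rw [hC, Walk.cons_isPath_iff]
    exact ⟨hq.reverse, by rwa [Walk.support_reverse, List.mem_reverse]⟩
  have hpe : p = C.reverse := path_eq hT hp hCpath.reverse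
  subst hpe
  have hClen : C.length = q.length + 1 := by simp [hC]
  constructor
  · rw [Walk.length_reverse]; omega
  · rw [Walk.getVert_reverse, Walk.length_reverse]
    have h1 : C.length - (C.length - 1) = 1 := by omega
    rw [h1, hC, Walk.getVert_cons_succ, Walk.getVert_zero]

lemma parent_unique {x x' y : V} (h : T.Adj x y) (h' : T.Adj x' y)
    (hA : Ancestor T z x y) (hA' : Ancestor T z x' y) : x = x' := by
  obtain ⟨p, hp⟩ := exists_path hT z y
  have e1 := (penult hT z h hA hp).2
  have e2 := (penult hT z h' hA' hp).2
  rw [← e1, ← e2]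

lemma index_lt {y : V} {p : T.Walk z y} (hp : p.IsPath) {i j : ℕ}
    (hi : i ≤ p.length) (hj : j ≤ p.length)
    (hA : Ancestor T z (p.getVert i) (p.getVert j)) (hne : p.getVert i ≠ p.getVert j) :
    i < j := by
  by_contra hc
  push_neg at hc
  exact hne (anc_antisymm hT z hA (anc_of_le hT z hp hc hi))

lemma child_unique {m a b : V} (ha : T.Adj m a) (hb : T.Adj m b)
    (hAa : Ancestor T z m a) (hAb : Ancestor T z m b)
    (hrel : Ancestor T z a b ∨ Ancestor T z b a) : a = b := by
  have key : ∀ a' b' : V, T.Adj m a' → T.Adj m b' → Ancestor T z m a' → Ancestor T z m b' →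
      Ancestor T z a' b' → a' = b' := by
    intro a' b' ha' hb' hAa' hAb' hab
    obtain ⟨p, hp⟩ := exists_path hT z b'
    obtain ⟨hlen, hpen⟩ := penult hT z hb' hAb' hp
    have hasup : a' ∈ p.support := (anc_iff hT z hp).mp hab
    obtain ⟨j, hj, hjle⟩ := Walk.mem_support_iff_exists_getVert.mp hasup
    have hma : Ancestor T z (p.getVert (p.length - 1)) (p.getVert j) := by
      rw [hpen, hj]; exact hAa'
    have hne : p.getVert (p.length - 1) ≠ p.getVert j := by
      rw [hpen, hj]; exact ha'.ne
    have := index_lt hT z hp (by omega) hjle hma hne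
    have : j = p.length := by omega
    rw [this, Walk.getVert_length] at hj
    rw [← hj]
  rcases hrel with hab | hba
  · exact key a b ha hb hAa hAb hab
  · exact (key b a hb ha hAb hAa hba).symm

section Steps
variable {u v : V} {p : T.Walk u v}

/-- Each step is up or down. -/
lemma step_up_or_down (hp : p.IsPath) {i : ℕ} (hi : i < p.length) :
    Ancestor T z (p.getVert i) (p.getVert (i+1)) ∨ Ancestor T z (p.getVert (i+1)) (p.getVert i) :=
  adj_related hT z (p.adj_getVert_succ hi)

lemma step_not_both (hp : p.IsPath) {i : ℕ} (hi : i < p.length)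
    (h1 : Ancestor T z (p.getVert i) (p.getVert (i+1)))
    (h2 : Ancestor T z (p.getVert (i+1)) (p.getVert i)) : False :=
  (p.adj_getVert_succ hi).ne (anc_antisymm hT z h1 h2)

/-- No up-step just after a down-step. -/
lemma no_turn (hp : p.IsPath) {i : ℕ} (hi : i + 1 < p.length)
    (hd : Ancestor T z (p.getVert i) (p.getVert (i+1))) :
    Ancestor T z (p.getVert (i+1)) (p.getVert (i+2)) := by
  rcases step_up_or_down hT z hp hi with h | h
  · exact h
  · exfalso
    -- p.getVert i and p.getVert (i+2) are both parents of p.getVert (i+1)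
    have hadj1 : T.Adj (p.getVert i) (p.getVert (i+1)) := p.adj_getVert_succ (by omega)
    have hadj2 : T.Adj (p.getVert (i+2)) (p.getVert (i+1)) := (p.adj_getVert_succ hi).symm
    have := parent_unique hT z hadj1 hadj2 hd h
    have := getVert_inj hp (i := i) (j := i+2) (by omega) (by omega) this
    omega

lemma down_propagate (hp : p.IsPath) {i j : ℕ} (hij : i ≤ j) (hj : j < p.length)
    (hd : Ancestor T z (p.getVert i) (p.getVert (i+1))) :
    Ancestor T z (p.getVert j) (p.getVert (j+1)) := by
  induction j with
  | zero => have : i = 0 := by omega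
            subst this; exact hd
  | succ k ih =>
    rcases Nat.lt_or_ge i (k+1) with h | h
    · have hk : Ancestor T z (p.getVert k) (p.getVert (k+1)) := ih (by omega) (by omega)
      exact no_turn hT z hp (by omega) hk
    · have : i = k + 1 := by omega
      subst this; exact hd

lemma up_before (hp : p.IsPath) {i j : ℕ} (hij : i ≤ j) (hj : j < p.length)
    (hu : Ancestor T z (p.getVert (j+1)) (p.getVert j)) :
    Ancestor T z (p.getVert (i+1)) (p.getVert i) := by
  rcases step_up_or_down hT z hp (lt_of_le_of_lt hij hj) with h | h
  · exact absurd (down_propagate hT z hp hij hj h) (fun hd => step_not_both hT z hp hj hd hu)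
  · exact h

/-- A chain of down-steps gives ancestry. -/
lemma chain_down (hp : p.IsPath) {k : ℕ}
    (hd : ∀ i, k ≤ i → i < p.length → Ancestor T z (p.getVert i) (p.getVert (i+1))) :
    ∀ j, k ≤ j → j ≤ p.length → Ancestor T z (p.getVert k) (p.getVert j) := by
  intro j
  induction j with
  | zero => intro h1 h2
            have : k = 0 := by omega
            subst this; exact anc_refl hT z _
  | succ n ih =>
    intro h1 h2
    rcases Nat.lt_or_ge k (n+1) with h | h
    · exact anc_trans hT z (ih (by omega) (by omega)) (hd n (by omega) (by omega))
    · have : k = n + 1 := by omega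
      subst this; exact anc_refl hT z _

/-- A chain of up-steps gives ancestry (towards smaller indices). -/
lemma chain_up (hp : p.IsPath) {k : ℕ} (hk : k ≤ p.length)
    (hu : ∀ i, i < k → Ancestor T z (p.getVert (i+1)) (p.getVert i)) :
    ∀ j, j ≤ k → Ancestor T z (p.getVert k) (p.getVert j) := by
  have key : ∀ d, d ≤ k → Ancestor T z (p.getVert k) (p.getVert (k - d)) := by
    intro d
    induction d with
    | zero => intro _; simpa using anc_refl hT z (p.getVert k)
    | succ n ih =>
      intro hd
      have h1 : Ancestor T z (p.getVert k) (p.getVert (k - n)) := ih (by omega)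
      have h2 : Ancestor T z (p.getVert (k - n - 1 + 1)) (p.getVert (k - n - 1)) :=
        hu (k - n - 1) (by omega)
      have he : k - n - 1 + 1 = k - n := by omega
      rw [he] at h2
      have : k - (n + 1) = k - n - 1 := by omega
      rw [this]
      exact anc_trans hT z h1 h2
  intro j hj
  have := key (k - j) (by omega)
  have he : k - (k - j) = j := by omega
  rwa [he] at this

/-- Every path has a turning point: up-steps, then down-steps. -/
lemma exists_turn (hp : p.IsPath) :
    ∃ k ≤ p.length, (∀ i, i < k → Ancestor T z (p.getVert (i+1)) (p.getVert i)) ∧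
      (∀ i, k ≤ i → i < p.length → Ancestor T z (p.getVert i) (p.getVert (i+1))) := by
  classical
  by_cases hall : ∀ i, i < p.length → Ancestor T z (p.getVert (i+1)) (p.getVert i)
  · exact ⟨p.length, le_rfl, fun i hi => hall i hi, fun i h1 h2 => by omega⟩
  · push_neg at hall
    obtain ⟨i0, hi0, hnd⟩ := hall
    have hex : ∃ i, i < p.length ∧ Ancestor T z (p.getVert i) (p.getVert (i+1)) := by
      refine ⟨i0, hi0, ?_⟩
      rcases step_up_or_down hT z hp hi0 with h | h
      · exact h
      · exact absurd h hnd
    have hdec : DecidablePred fun i => i < p.length ∧ Ancestor T z (p.getVert i) (p.getVert (i+1)) :=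
      fun _ => Classical.propDecidable _
    have hk := Nat.find_spec hex
    refine ⟨Nat.find hex, by omega, ?_, ?_⟩
    · intro i hi
      have hnP := Nat.find_min hex hi
      have hilen : i < p.length := by omega
      rcases step_up_or_down hT z hp hilen with h | h
      · exact absurd ⟨hilen, h⟩ hnP
      · exact h
    · intro i h1 h2
      exact down_propagate hT z hp h1 h2 hk.2

end Steps

/-- Structure of a unimodal request: first arc up, last arc down, and the middle has
two distinct children leading to the endpoints. -/
lemma unimodal_struct {r : Request T} {m : V} (hr : Unimodal T z r) (hm : IsMiddle T z r m) :
    (T.Adj r.sPlus r.s ∧ r.sPlus ≠ r.s ∧ Ancestor T z r.sPlus r.s) ∧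
    (T.Adj r.tMinus r.t ∧ r.tMinus ≠ r.t ∧ Ancestor T z r.tMinus r.t) ∧
    ∃ a b : V, T.Adj m a ∧ T.Adj m b ∧ Ancestor T z m a ∧ Ancestor T z m b ∧
      a ≠ b ∧ Ancestor T z a r.s ∧ Ancestor T z b r.t := by
  have hp : r.toWalk.IsPath := r.isPath
  have hn : 1 ≤ r.toWalk.length := r.one_le_length
  obtain ⟨k, hk, hup, hdown⟩ := exists_turn hT z hp
  have hk1 : 1 ≤ k := by
    by_contra hc
    push_neg at hc
    exact hr.2 (fun i hi => hdown i (by omega) hi)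
  have hk2 : k < r.toWalk.length := by
    rcases lt_or_eq_of_le hk with h | h
    · exact h
    · exact absurd (fun i hi => hup i (by omega)) hr.1
  have hs0 : r.toWalk.getVert 0 = r.s := r.toWalk.getVert_zero
  have hsl : r.toWalk.getVert r.toWalk.length = r.t := r.toWalk.getVert_length
  have hsPlus : r.sPlus = r.toWalk.getVert 1 := rfl
  have htMinus : r.tMinus = r.toWalk.getVert (r.toWalk.length - 1) := rfl
  refine ⟨⟨?_, ?_, ?_⟩, ⟨?_, ?_, ?_⟩, ?_⟩
  · have := (r.toWalk.adj_getVert_succ (i := 0) (by omega)).symm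
    rwa [hs0, ← hsPlus] at this
  · intro he
    rw [hsPlus] at he
    have := getVert_inj hp (i := 1) (j := 0) (by omega) (by omega) (he.trans hs0.symm)
    omega
  · have := hup 0 (by omega)
    rwa [hs0, ← hsPlus] at this
  · have := r.toWalk.adj_getVert_succ (i := r.toWalk.length - 1) (by omega)
    rwa [Nat.sub_add_cancel hn, hsl, ← htMinus] at this
  · intro he
    rw [htMinus] at he
    have := getVert_inj hp (i := r.toWalk.length - 1) (j := r.toWalk.length)
      (by omega) (by omega) (he.trans hsl.symm)
    omega
  · have := hdown (r.toWalk.length - 1) (by omega) (by omega)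
    rwa [Nat.sub_add_cancel hn, hsl, ← htMinus] at this
  · have hmk : m = r.toWalk.getVert k := by
      have h1 : Ancestor T z m (r.toWalk.getVert k) :=
        hm.2 _ (Walk.mem_support_iff_exists_getVert.mpr ⟨k, rfl, hk⟩)
      have h2 : Ancestor T z (r.toWalk.getVert k) m := by
        obtain ⟨i, hi, hile⟩ := Walk.mem_support_iff_exists_getVert.mp hm.1
        rcases le_total i k with h | h
        · rw [← hi]; exact chain_up hT z hp hk hup i h
        · rw [← hi]; exact chain_down hT z hp hdown i h hile
      exact anc_antisymm hT z h1 h2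
    refine ⟨r.toWalk.getVert (k-1), r.toWalk.getVert (k+1), ?_, ?_, ?_, ?_, ?_, ?_, ?_⟩
    · have := (r.toWalk.adj_getVert_succ (i := k - 1) (by omega)).symm
      rwa [Nat.sub_add_cancel hk1, ← hmk] at this
    · have := r.toWalk.adj_getVert_succ hk2
      rwa [← hmk] at this
    · have := hup (k-1) (by omega)
      rwa [Nat.sub_add_cancel hk1, ← hmk] at this
    · have := hdown k le_rfl hk2
      rwa [← hmk] at this
    · intro he
      have := getVert_inj hp (i := k-1) (j := k+1) (by omega) (by omega) he
      omega
    · have := chain_up hT z hp (show k - 1 ≤ r.toWalk.length by omega)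
        (fun i hi => hup i (by omega)) 0 (by omega)
      rwa [hs0] at this
    · have := chain_down hT z hp (k := k+1) (fun i h1 h2 => hdown i (by omega) h2)
        r.toWalk.length (by omega) le_rfl
      rwa [hsl] at this

/-- Characterization of interference for unimodal requests. -/
lemma interferesOn_iff {r r' : Request T} {m m' : V}
    (hr : Unimodal T z r) (hr' : Unimodal T z r')
    (hm : IsMiddle T z r m) (hm' : IsMiddle T z r' m') :
    InterferesOn T r r' ↔ ¬ Related T z r.s r'.t := by
  obtain ⟨⟨hadj_s, hne_s, hA_s⟩, _, _⟩ := unimodal_struct hT z hr hm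
  obtain ⟨_, ⟨hadj_t, hne_t, hA_t⟩, _⟩ := unimodal_struct hT z hr' hm'
  constructor
  · rintro ⟨p, hp, hlen, h1, h2⟩ hrel
    have hne : r.s ≠ r'.t := by
      intro he
      have e0 : p.getVert 0 = r.s := p.getVert_zero
      have el : p.getVert p.length = r'.t := p.getVert_length
      have : p.getVert 0 = p.getVert p.length := by rw [e0, el, he]
      have := getVert_inj hp (by omega) (le_rfl) this
      omega
    rcases hrel with hst | hts
    · obtain ⟨P, hP, hsmem⟩ := hst
      obtain ⟨j, hj, hjle⟩ := Walk.mem_support_iff_exists_getVert.mp hsmem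
      have hjlt : j < P.length := by
        rcases lt_or_eq_of_le hjle with h | h
        · exact h
        · exfalso; apply hne; rw [← hj, h, P.getVert_length]
      obtain ⟨q, hq, hqlen, hqgv, _⟩ := exists_suffix P hP j hjle
      have hpq : p = q.copy hj rfl := path_eq hT hp (by rwa [Walk.isPath_copy])
      have hgv1 : p.getVert 1 = P.getVert (j+1) := by
        rw [hpq, Walk.getVert_copy]; exact hqgv 1
      have hanc : Ancestor T z r.s (P.getVert (j+1)) := by
        rw [← hj]
        exact anc_of_le hT z hP (by omega) (by omega)
      rw [← hgv1, h1] at hanc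
      exact hne_s (anc_antisymm hT z hA_s hanc)
    · obtain ⟨P, hP, htmem⟩ := hts
      obtain ⟨j, hj, hjle⟩ := Walk.mem_support_iff_exists_getVert.mp htmem
      have hjlt : j < P.length := by
        rcases lt_or_eq_of_le hjle with h | h
        · exact h
        · exfalso; apply hne; rw [← hj, h, P.getVert_length]
      obtain ⟨q, hq, hqlen, hqgv, _⟩ := exists_suffix P hP j hjle
      have hpq : p.reverse = q.copy hj rfl := path_eq hT hp.reverse (by rwa [Walk.isPath_copy])
      have hgv1 : p.getVert (p.length - 1) = P.getVert (j+1) := by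
        have := Walk.getVert_reverse p 1
        rw [hpq, Walk.getVert_copy] at this
        rw [← this]; exact (hqgv 1).symm ▸ rfl
      have hanc : Ancestor T z r'.t (P.getVert (j+1)) := by
        rw [← hj]
        exact anc_of_le hT z hP (by omega) (by omega)
      rw [← hgv1, h2] at hanc
      exact hne_t (anc_antisymm hT z hA_t hanc)
  · intro hnrel
    obtain ⟨p, hp⟩ := exists_path hT r.s r'.t
    have hlen : 1 ≤ p.length := by
      by_contra hc
      push_neg at hc
      have hl0 : p.length = 0 := by omega
      have : r.s = r'.t := by
        have := p.getVert_length
        rw [hl0, p.getVert_zero] at this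
        exact this
      exact hnrel (Or.inl (this ▸ anc_refl hT z r.s))
    obtain ⟨k, hk, hup, hdown⟩ := exists_turn hT z hp
    have hk1 : 1 ≤ k := by
      by_contra hc
      push_neg at hc
      have hk0 : k = 0 := by omega
      apply hnrel
      left
      have := chain_down hT z hp (k := 0) (fun i h1 h2 => hdown i (by omega) h2)
        p.length (by omega) (by omega)
      rwa [p.getVert_zero, p.getVert_length] at this
    have hk2 : k < p.length := by
      rcases lt_or_eq_of_le hk with h | h
      · exact h
      · exfalso
        apply hnrel
        right
        have := chain_up hT z hp hk (fun i hi => hup i (by omega)) 0 (by omega)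
        rwa [h, p.getVert_zero, p.getVert_length] at this
    refine ⟨p, hp, hlen, ?_, ?_⟩
    · have hadj : T.Adj (p.getVert 1) r.s := by
        have := p.adj_getVert_succ (i := 0) (by omega)
        rw [p.getVert_zero] at this
        exact this.symm
      have hanc : Ancestor T z (p.getVert 1) r.s := by
        have := hup 0 hk1
        rwa [p.getVert_zero] at this
      exact parent_unique hT z hadj hadj_s hanc hA_s
    · have hadj : T.Adj (p.getVert (p.length - 1)) r'.t := by
        have := p.adj_getVert_succ (i := p.length - 1) (by omega)
        rwa [Nat.sub_add_cancel hlen, p.getVert_length] at this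
      have hanc : Ancestor T z (p.getVert (p.length - 1)) r'.t := by
        have := hdown (p.length - 1) (by omega) (by omega)
        rwa [Nat.sub_add_cancel hlen, p.getVert_length] at this
      exact parent_unique hT z hadj hadj_t hanc hA_t

/-- Two non-interfering unimodal requests have the same middle. -/
lemma middle_eq {r r' : Request T} {m m' : V}
    (hr : Unimodal T z r) (hr' : Unimodal T z r')
    (hm : IsMiddle T z r m) (hm' : IsMiddle T z r' m')
    (h1 : Related T z r.s r'.t) (h2 : Related T z r'.s r.t) : m = m' := by
  obtain ⟨_, _, a, b, hma, hmb, hAma, hAmb, hab, hAas, hAbt⟩ := unimodal_struct hT z hr hm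
  obtain ⟨_, _, a', b', hma', hmb', hAma', hAmb', hab', hAas', hAbt'⟩ :=
    unimodal_struct hT z hr' hm'
  have hmt : Ancestor T z m r.t := hm.2 r.t r.toWalk.end_mem_support
  have hms : Ancestor T z m r.s := hm.2 r.s r.toWalk.start_mem_support
  have hm't' : Ancestor T z m' r'.t := hm'.2 r'.t r'.toWalk.end_mem_support
  have hm's' : Ancestor T z m' r'.s := hm'.2 r'.s r'.toWalk.start_mem_support
  have hRel : Ancestor T z m m' ∨ Ancestor T z m' m := by
    rcases h2 with hs't | hts'
    · exact anc_comparable hT z hmt (anc_trans hT z hm's' hs't)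
    · exact anc_comparable hT z (anc_trans hT z hmt hts') hm's'
  by_contra hne
  rcases hRel with hmm' | hm'm
  · obtain ⟨P, hP, hmmem⟩ := hmm'
    obtain ⟨j, hj, hjle⟩ := Walk.mem_support_iff_exists_getVert.mp hmmem
    have hjlt : j < P.length := by
      rcases lt_or_eq_of_le hjle with h | h
      · exact h
      · exfalso; apply hne; rw [← hj, h, P.getVert_length]
    have hAmc : Ancestor T z m (P.getVert (j+1)) := by
      rw [← hj]; exact anc_of_le hT z hP (by omega) (by omega)
    have hadjmc : T.Adj m (P.getVert (j+1)) := by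
      rw [← hj]; exact P.adj_getVert_succ hjlt
    have hAcm' : Ancestor T z (P.getVert (j+1)) m' := by
      have := anc_of_le hT z hP (i := j+1) (j := P.length) (by omega) le_rfl
      rwa [P.getVert_length] at this
    have hac : a = P.getVert (j+1) := by
      refine child_unique hT z hma hadjmc hAma hAmc ?_
      rcases h1 with hst' | ht's
      · exact anc_comparable hT z (anc_trans hT z hAas hst') (anc_trans hT z hAcm' hm't')
      · exact anc_comparable hT z hAas (anc_trans hT z hAcm' (anc_trans hT z hm't' ht's))
    have hbc : b = P.getVert (j+1) := by
      refine child_unique hT z hmb hadjmc hAmb hAmc ?_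
      rcases h2 with hs't | hts'
      · exact anc_comparable hT z hAbt (anc_trans hT z hAcm' (anc_trans hT z hm's' hs't))
      · exact anc_comparable hT z (anc_trans hT z hAbt hts') (anc_trans hT z hAcm' hm's')
    exact hab (hac.trans hbc.symm)
  · obtain ⟨P, hP, hmmem⟩ := hm'm
    obtain ⟨j, hj, hjle⟩ := Walk.mem_support_iff_exists_getVert.mp hmmem
    have hjlt : j < P.length := by
      rcases lt_or_eq_of_le hjle with h | h
      · exact h
      · exfalso; apply hne; rw [← hj, h, P.getVert_length]
    have hAmc : Ancestor T z m' (P.getVert (j+1)) := by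
      rw [← hj]; exact anc_of_le hT z hP (by omega) (by omega)
    have hadjmc : T.Adj m' (P.getVert (j+1)) := by
      rw [← hj]; exact P.adj_getVert_succ hjlt
    have hAcm : Ancestor T z (P.getVert (j+1)) m := by
      have := anc_of_le hT z hP (i := j+1) (j := P.length) (by omega) le_rfl
      rwa [P.getVert_length] at this
    have hac : b' = P.getVert (j+1) := by
      refine child_unique hT z hmb' hadjmc hAmb' hAmc ?_
      rcases h1 with hst' | ht's
      · exact anc_comparable hT z hAbt' (anc_trans hT z hAcm (anc_trans hT z hms hst'))
      · exact anc_comparable hT z (anc_trans hT z hAbt' ht's) (anc_trans hT z hAcm hms)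
    have hbc : a' = P.getVert (j+1) := by
      refine child_unique hT z hma' hadjmc hAma' hAmc ?_
      rcases h2 with hs't | hts'
      · exact anc_comparable hT z (anc_trans hT z hAas' hs't) (anc_trans hT z hAcm hmt)
      · exact anc_comparable hT z hAas' (anc_trans hT z hAcm (anc_trans hT z hmt hts'))
    exact hab' (hbc.trans hac.symm)

end BidirTree
/-- Lemma 1(iv): two unimodal requests do not interfere iff they have the same
middle, `s_r` and `t_{r'}` are related, and `s_{r'}` and `t_r` are related. -/
theorem unimodal_not_interfere_iff {V : Type*} (T : SimpleGraph V) (hT : T.IsTree)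
    (z : V) (r r' : Request T) (m m' : V)
    (hr : Unimodal T z r) (hr' : Unimodal T z r')
    (hm : IsMiddle T z r m) (hm' : IsMiddle T z r' m') :
    ¬ Interfere T r r' ↔
      m = m' ∧ Related T z r.s r'.t ∧ Related T z r'.s r.t := by
  have hiff1 := BidirTree.interferesOn_iff hT z hr hr' hm hm'
  have hiff2 := BidirTree.interferesOn_iff hT z hr' hr hm' hm
  constructor
  · intro hni
    have h1 : Related T z r.s r'.t := by
      by_contra hc
      exact hni (Or.inl (hiff1.mpr hc))
    have h2 : Related T z r'.s r.t := by
      by_contra hc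
      exact hni (Or.inr (hiff2.mpr hc))
    exact ⟨BidirTree.middle_eq hT z hr hr' hm hm' h1 h2, h1, h2⟩
  · rintro ⟨_, h1, h2⟩ hint
    rcases hint with h | h
    · exact (hiff1.mp h) h1
    · exact (hiff2.mp h) h2
end

section
/- Let T be a bidirected tree rooted at a vertex z, let r be a unimodal request and r' a converging request in T. Then r and r' do not interfere if and only if m_r is an ancestor of t_{r'} and t_r and s_{r'} are related. -/
open SimpleGraph

variable {V : Type*}

section Infra
variable {V : Type*} {T : SimpleGraph V}

lemma getVert_mem_support' {u v : V} (p : T.Walk u v) (i : ℕ) : p.getVert i ∈ p.support := by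
  rcases le_or_gt i p.length with h | h
  · exact Walk.mem_support_iff_exists_getVert.2 ⟨i, rfl, h⟩
  · rw [p.getVert_of_length_le h.le]; exact Walk.end_mem_support p

lemma getVert_inj' {u v : V} {p : T.Walk u v} (hp : p.IsPath) : ∀ {i j : ℕ},
    i ≤ p.length → j ≤ p.length → p.getVert i = p.getVert j → i = j := by
  induction p with
  | nil => intro i j hi hj _; simp only [Walk.length_nil, Nat.le_zero] at hi hj; omega
  | @cons a b c h q ih =>
    intro i j hi hj hij
    match i, j with
    | 0, 0 => rfl
    | 0, j + 1 =>
      exfalso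
      rw [Walk.getVert_zero, Walk.getVert_cons_succ] at hij
      exact ((Walk.cons_isPath_iff h q).1 hp).2 (hij ▸ getVert_mem_support' q j)
    | i + 1, 0 =>
      exfalso
      rw [Walk.getVert_zero, Walk.getVert_cons_succ] at hij
      exact ((Walk.cons_isPath_iff h q).1 hp).2 (hij ▸ getVert_mem_support' q i)
    | i + 1, j + 1 =>
      rw [Walk.getVert_cons_succ, Walk.getVert_cons_succ] at hij
      have := ih ((Walk.cons_isPath_iff h q).1 hp).1
        (by simpa [Nat.succ_le_succ_iff] using hi) (by simpa [Nat.succ_le_succ_iff] using hj) hij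
      omega

section Tree
set_option linter.unusedSectionVars false
set_option linter.unusedVariables false
variable [DecidableEq V]

lemma path_eq' (hT : T.IsTree) {x y : V} (p q : T.Walk x y) (hp : p.IsPath) (hq : q.IsPath) : p = q :=
  (hT.existsUnique_path x y).unique hp hq

lemma exists_path' (hT : T.IsTree) (x y : V) : ∃ p : T.Walk x y, p.IsPath :=
  (hT.existsUnique_path x y).exists

lemma anc_iff (hT : T.IsTree) (z : V) {x y : V} (P : T.Walk z y) (hP : P.IsPath) :
    Ancestor T z x y ↔ x ∈ P.support :=
  ⟨fun ⟨q, hq, hx⟩ => (path_eq' hT q P hq hP) ▸ hx, fun h => ⟨P, hP, h⟩⟩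

lemma anc_refl (hT : T.IsTree) (z : V) (y : V) : Ancestor T z y y := by
  obtain ⟨P, hP⟩ := exists_path' hT z y
  exact ⟨P, hP, Walk.end_mem_support P⟩

lemma anc_root (hT : T.IsTree) (z : V) (y : V) : Ancestor T z z y := by
  obtain ⟨P, hP⟩ := exists_path' hT z y
  exact ⟨P, hP, Walk.start_mem_support P⟩

lemma isPath_append_takeUntil {x y w : V} {Q₁ : T.Walk x y} {Q₂ : T.Walk y w}
    (h : (Q₁.append Q₂).IsPath) {v : V} (hv : v ∈ Q₂.support) :
    (Q₁.append (Q₂.takeUntil v hv)).IsPath := by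
  rw [Walk.isPath_def, Walk.support_append] at h ⊢
  refine List.Nodup.sublist ?_ h
  refine List.Sublist.append_left ?_ _
  have htail : Q₂.support.tail
      = (Q₂.takeUntil v hv).support.tail ++ (Q₂.dropUntil v hv).support.tail := by
    rw [← Walk.tail_support_append, Walk.take_spec]
  rw [htail]
  exact List.sublist_append_left _ _

lemma anc_of_mem_dropUntil (hT : T.IsTree) (z : V) {x y v : V} (P : T.Walk z y) (hP : P.IsPath)
    (hx : x ∈ P.support) (hv : v ∈ (P.dropUntil x hx).support) : Ancestor T z x v := by
  have happ : ((P.takeUntil x hx).append (P.dropUntil x hx)).IsPath := by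
    rw [Walk.take_spec]; exact hP
  exact ⟨_, isPath_append_takeUntil happ hv,
    by rw [Walk.mem_support_append_iff]; exact Or.inl (Walk.end_mem_support _)⟩

lemma anc_trans (hT : T.IsTree) (z : V) {x y w : V}
    (h1 : Ancestor T z x y) (h2 : Ancestor T z y w) : Ancestor T z x w := by
  obtain ⟨P, hP, hy⟩ := h2
  have hx : x ∈ (P.takeUntil y hy).support := (anc_iff hT z _ (hP.takeUntil hy)).1 h1
  exact ⟨P, hP, P.support_takeUntil_subset hy hx⟩

lemma anc_antisymm (hT : T.IsTree) (z : V) {x y : V}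
    (h1 : Ancestor T z x y) (h2 : Ancestor T z y x) : x = y := by
  obtain ⟨P, hP, hx⟩ := h1
  by_contra hne
  have hy : y ∈ (P.takeUntil x hx).support := (anc_iff hT z _ (hP.takeUntil hx)).1 h2
  have hnd : P.support.Nodup := hP.support_nodup
  rw [← P.take_spec hx, Walk.support_append] at hnd
  have hy2 : y ∈ (P.dropUntil x hx).support.tail := by
    have hmem : y ∈ (P.dropUntil x hx).support := Walk.end_mem_support _
    rw [Walk.support_eq_cons] at hmem
    rcases List.mem_cons.1 hmem with h | h
    · exact absurd h (Ne.symm hne)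
    · exact h
  exact (List.disjoint_of_nodup_append hnd) hy hy2

lemma anc_comparable (hT : T.IsTree) (z : V) {x y w : V}
    (h1 : Ancestor T z x w) (h2 : Ancestor T z y w) : Ancestor T z x y ∨ Ancestor T z y x := by
  obtain ⟨P, hP, hyw⟩ := h2
  have hx : x ∈ P.support := (anc_iff hT z P hP).1 h1
  rw [← P.take_spec hyw, Walk.mem_support_append_iff] at hx
  rcases hx with hx | hx
  · exact Or.inl ⟨_, hP.takeUntil hyw, hx⟩
  · exact Or.inr (anc_of_mem_dropUntil hT z P hP hyw hx)

lemma adj_comparable (hT : T.IsTree) (z : V) {u v : V} (h : T.Adj u v) :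
    Ancestor T z u v ∨ Ancestor T z v u := by
  obtain ⟨P, hP⟩ := exists_path' hT z v
  by_cases hu : u ∈ P.support
  · exact Or.inl ⟨P, hP, hu⟩
  · refine Or.inr ⟨P.append (Walk.cons h.symm Walk.nil), ?_, ?_⟩
    · have hsupp : (Walk.cons h.symm (Walk.nil : T.Walk u u)).support.tail = [u] := rfl
      rw [Walk.isPath_def, Walk.support_append, hsupp]
      refine List.Nodup.append hP.support_nodup (List.nodup_singleton u) ?_
      intro a ha hb
      rw [List.mem_singleton] at hb
      subst hb
      exact hu ha
    · rw [Walk.mem_support_append_iff]; exact Or.inl (Walk.end_mem_support P)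

lemma anc_sandwich (hT : T.IsTree) (z : V) {u v w : V} (h : T.Adj u v)
    (huv : Ancestor T z u v) (hwv : Ancestor T z w v) : w = v ∨ Ancestor T z w u := by
  obtain ⟨P, hP, hu⟩ := huv
  have hw : w ∈ P.support := (anc_iff hT z P hP).1 hwv
  have hD : P.dropUntil u hu = Walk.cons h Walk.nil :=
    path_eq' hT _ _ (hP.dropUntil hu)
      ((Walk.cons_isPath_iff h Walk.nil).2 ⟨Walk.IsPath.nil, by simp [h.ne]⟩)
  rw [← P.take_spec hu, Walk.mem_support_append_iff, hD] at hw
  rcases hw with hw | hw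
  · exact Or.inr ⟨_, hP.takeUntil hu, hw⟩
  · simp only [Walk.support_cons, Walk.support_nil, List.mem_cons, List.mem_singleton,
      List.not_mem_nil, or_false] at hw
    rcases hw with rfl | rfl
    · exact Or.inr (anc_refl hT z w)
    · exact Or.inl rfl

lemma parent_unique (hT : T.IsTree) (z : V) {x p q : V} (hp : T.Adj p x) (hap : Ancestor T z p x)
    (hq : T.Adj q x) (haq : Ancestor T z q x) : p = q := by
  rcases anc_sandwich hT z hp hap haq with h | h
  · exact absurd h hq.ne
  · rcases anc_sandwich hT z hq haq hap with h' | h'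
    · exact absurd h' hp.ne
    · exact anc_antisymm hT z h' h

lemma down_step (hT : T.IsTree) (z : V) {x y : V} {P : T.Walk x y} (hP : P.IsPath) {i : ℕ}
    (hi : i + 1 < P.length)
    (hdown : Ancestor T z (P.getVert i) (P.getVert (i+1))) :
    Ancestor T z (P.getVert (i+1)) (P.getVert (i+2)) := by
  have hadj1 : T.Adj (P.getVert i) (P.getVert (i+1)) := P.adj_getVert_succ (by omega)
  have hadj2 : T.Adj (P.getVert (i+1)) (P.getVert (i+2)) := P.adj_getVert_succ hi
  rcases adj_comparable hT z hadj2 with h | h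
  · exact h
  · have heq : P.getVert i = P.getVert (i+2) :=
      parent_unique hT z hadj1 hdown hadj2.symm h
    have := getVert_inj' hP (i := i) (j := i+2) (by omega) (by omega) heq
    omega

lemma down_arcs (hT : T.IsTree) (z : V) {x y : V} {P : T.Walk x y} (hP : P.IsPath) {j : ℕ}
    (hdown : Ancestor T z (P.getVert j) (P.getVert (j+1))) :
    ∀ i, j ≤ i → i < P.length → Ancestor T z (P.getVert i) (P.getVert (i+1)) := by
  intro i hji hi
  induction i, hji using Nat.le_induction with
  | base => exact hdown
  | succ i hji IH => exact down_step hT z hP hi (IH (by omega))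

lemma down_chain (hT : T.IsTree) (z : V) {x y : V} {P : T.Walk x y} (hP : P.IsPath) {j : ℕ}
    (hj : j < P.length) (hdown : Ancestor T z (P.getVert j) (P.getVert (j+1))) :
    ∀ i i', j ≤ i → i ≤ i' → i' ≤ P.length → Ancestor T z (P.getVert i) (P.getVert i') := by
  intro i i' hji hii hi'
  induction i', hii using Nat.le_induction with
  | base => exact anc_refl hT z _
  | succ i' hii IH =>
    exact anc_trans hT z (IH (by omega)) (down_arcs hT z hP hdown i' (by omega) (by omega))

lemma up_arcs (hT : T.IsTree) (z : V) {x y : V} {P : T.Walk x y} (hP : P.IsPath) {j : ℕ}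
    (hj : j < P.length) (hup : Ancestor T z (P.getVert (j+1)) (P.getVert j)) :
    ∀ i, i ≤ j → Ancestor T z (P.getVert (i+1)) (P.getVert i) := by
  intro i hij
  by_contra hcon
  have hadj : T.Adj (P.getVert i) (P.getVert (i+1)) := P.adj_getVert_succ (by omega)
  have hdown : Ancestor T z (P.getVert i) (P.getVert (i+1)) :=
    (adj_comparable hT z hadj).resolve_right hcon
  have hdj : Ancestor T z (P.getVert j) (P.getVert (j+1)) := down_arcs hT z hP hdown j hij hj
  have heq := anc_antisymm hT z hdj hup
  exact (P.adj_getVert_succ hj).ne heq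

lemma up_chain (hT : T.IsTree) (z : V) {x y : V} {P : T.Walk x y} (hP : P.IsPath) {j : ℕ}
    (hj : j < P.length) (hup : Ancestor T z (P.getVert (j+1)) (P.getVert j)) :
    ∀ i i', i ≤ i' → i' ≤ j + 1 → Ancestor T z (P.getVert i') (P.getVert i) := by
  intro i i' hii hi'
  induction i', hii using Nat.le_induction with
  | base => exact anc_refl hT z _
  | succ i' hii IH =>
    exact anc_trans hT z (up_arcs hT z hP hj hup i' (by omega)) (IH (by omega))

lemma anc_root_eq (hT : T.IsTree) (z : V) {x : V} (h : Ancestor T z x z) : x = z :=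
  anc_antisymm hT z h (anc_root hT z x)

lemma getVert_dropUntil {u y x : V} (P : T.Walk u y) (hx : x ∈ P.support) (i : ℕ) :
    (P.dropUntil x hx).getVert i = P.getVert ((P.takeUntil x hx).length + i) := by
  have h := Walk.getVert_append (P.takeUntil x hx) (P.dropUntil x hx)
    ((P.takeUntil x hx).length + i)
  rw [P.take_spec hx] at h
  rw [h, if_neg (by omega)]
  congr 1
  omega

lemma length_take_add_drop {u y x : V} (P : T.Walk u y) (hx : x ∈ P.support) :
    (P.takeUntil x hx).length + (P.dropUntil x hx).length = P.length := by
  have := congr_arg Walk.length (P.take_spec hx)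
  rwa [Walk.length_append] at this

lemma penult_dropUntil {u y x : V} (P : T.Walk u y) (hx : x ∈ P.support) (hxy : x ≠ y) :
    (P.dropUntil x hx).getVert ((P.dropUntil x hx).length - 1) = P.getVert (P.length - 1) := by
  have hD : 1 ≤ (P.dropUntil x hx).length := by
    rcases Nat.eq_zero_or_pos (P.dropUntil x hx).length with h | h
    · exact absurd (Walk.eq_of_length_eq_zero h) hxy
    · exact h
  rw [getVert_dropUntil]
  congr 1
  have := length_take_add_drop P hx
  omega

lemma penult_parent (hT : T.IsTree) (z : V) {y : V} (hy : y ≠ z) (P : T.Walk z y)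
    (hP : P.IsPath) :
    T.Adj (P.getVert (P.length - 1)) y ∧ Ancestor T z (P.getVert (P.length - 1)) y := by
  have hlen : 1 ≤ P.length := by
    rcases Nat.eq_zero_or_pos P.length with h | h
    · exact absurd (Walk.eq_of_length_eq_zero h).symm hy
    · exact h
  constructor
  · have := P.adj_getVert_succ (i := P.length - 1) (by omega)
    rwa [show P.length - 1 + 1 = P.length by omega, P.getVert_length] at this
  · exact ⟨P, hP, getVert_mem_support' P _⟩

end Tree
end Infra

section Main
variable {V : Type*} {T : SimpleGraph V} [DecidableEq V]
set_option linter.unusedSectionVars false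

lemma children_eq (hT : T.IsTree) (z : V) {m a b : V} (hma : T.Adj m a)
    (haa : Ancestor T z m a) (hmb : T.Adj m b) (hbb : Ancestor T z m b)
    (h : Ancestor T z a b ∨ Ancestor T z b a) : a = b := by
  rcases h with h | h
  · rcases anc_sandwich hT z hmb hbb h with h' | h'
    · exact h'
    · exact absurd (anc_antisymm hT z h' haa).symm hma.ne
  · rcases anc_sandwich hT z hma haa h with h' | h'
    · exact h'.symm
    · exact absurd (anc_antisymm hT z h' hbb).symm hmb.ne

lemma interferesOn_iff_anc (hT : T.IsTree) (z : V) {r r' : Request T}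
    (hsadj : T.Adj r.s r.sPlus) (hsanc : Ancestor T z r.sPlus r.s)
    (htadj : T.Adj r'.tMinus r'.t) (htanc : Ancestor T z r'.t r'.tMinus) :
    InterferesOn T r r' ↔ Ancestor T z r'.tMinus r.s := by
  constructor
  · rintro ⟨P, hP, hlen, h1, h2⟩
    have hQ : P.reverse.IsPath := hP.reverse
    have hq1 : P.reverse.getVert 1 = r'.tMinus := by
      rw [Walk.getVert_reverse]; exact h2
    have hdown : Ancestor T z (P.reverse.getVert 0) (P.reverse.getVert (0+1)) := by
      rw [Walk.getVert_zero, show (0+1 : ℕ) = 1 from rfl, hq1]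
      exact htanc
    have hchain := down_chain hT z hQ (j := 0)
      (by rw [Walk.length_reverse]; omega) hdown 1 P.reverse.length
      (by omega) (by rw [Walk.length_reverse]; omega) (le_refl _)
    rwa [hq1, Walk.getVert_length] at hchain
  · intro h
    have hsz : r.s ≠ z := by
      intro hz
      have h2 : r.sPlus = z := anc_root_eq hT z (hz ▸ hsanc)
      exact hsadj.ne (hz.trans h2.symm)
    obtain ⟨Pz, hPz⟩ := exists_path' hT z r.s
    have hmem : r'.tMinus ∈ Pz.support := (anc_iff hT z Pz hPz).1 h
    have hD : (Pz.dropUntil r'.tMinus hmem).IsPath := hPz.dropUntil hmem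
    have hnotin : r'.t ∉ (Pz.dropUntil r'.tMinus hmem).support := by
      intro hcon
      have h1 := anc_of_mem_dropUntil hT z Pz hPz hmem hcon
      exact htadj.ne (anc_antisymm hT z h1 htanc)
    have hW0 : (Walk.cons htadj.symm (Pz.dropUntil r'.tMinus hmem)).IsPath := hD.cons hnotin
    refine ⟨(Walk.cons htadj.symm (Pz.dropUntil r'.tMinus hmem)).reverse, hW0.reverse, ?_, ?_, ?_⟩
    · rw [Walk.length_reverse, Walk.length_cons]; omega
    · rw [Walk.getVert_reverse, Walk.length_cons, Nat.add_sub_cancel]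
      rcases Nat.eq_zero_or_pos (Pz.dropUntil r'.tMinus hmem).length with h0 | h0
      · have hts : r'.tMinus = r.s := Walk.eq_of_length_eq_zero h0
        rw [h0, Walk.getVert_zero]
        exact parent_unique hT z (hts ▸ htadj).symm (hts ▸ htanc) hsadj.symm hsanc
      · have hne : r'.tMinus ≠ r.s := by
          intro heq
          have := getVert_inj' hD (i := 0) (j := (Pz.dropUntil r'.tMinus hmem).length)
            (by omega) (le_refl _)
            (by rw [Walk.getVert_zero, Walk.getVert_length, heq])
          omega
        rw [show (Pz.dropUntil r'.tMinus hmem).length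
            = ((Pz.dropUntil r'.tMinus hmem).length - 1) + 1 from by omega,
          Walk.getVert_cons_succ, penult_dropUntil Pz hmem hne]
        have hpp := penult_parent hT z hsz Pz hPz
        exact parent_unique hT z hpp.1 hpp.2 hsadj.symm hsanc
    · rw [Walk.length_reverse, Walk.getVert_reverse, Walk.length_cons]
      rw [show (Pz.dropUntil r'.tMinus hmem).length + 1
          - ((Pz.dropUntil r'.tMinus hmem).length + 1 - 1) = 1 from by omega]
      exact (Walk.getVert_cons_succ (n := 0) _ _).trans (Walk.getVert_zero _)

lemma interferesOn_conv_iff (hT : T.IsTree) (z : V) {r r' : Request T}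
    (hsadj : T.Adj r'.s r'.sPlus) (hsanc : Ancestor T z r'.sPlus r'.s)
    (htadj : T.Adj r.tMinus r.t) (htanc : Ancestor T z r.tMinus r.t) :
    InterferesOn T r' r ↔ ¬ Related T z r.t r'.s := by
  constructor
  · rintro ⟨P, hP, hlen, h1, h2⟩ hrel
    have hrel' : Ancestor T z r.t r'.s ∨ Ancestor T z r'.s r.t := hrel
    rcases hrel' with h | h
    · obtain ⟨Pz, hPz⟩ := exists_path' hT z r'.s
      have hmem : r.t ∈ Pz.support := (anc_iff hT z Pz hPz).1 h
      have hPeq : Pz.dropUntil r.t hmem = P.reverse :=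
        path_eq' hT _ _ (hPz.dropUntil hmem) hP.reverse
      have hv : P.reverse.getVert 1 ∈ (Pz.dropUntil r.t hmem).support := by
        rw [hPeq]; exact getVert_mem_support' _ _
      have hanc := anc_of_mem_dropUntil hT z Pz hPz hmem hv
      rw [Walk.getVert_reverse, h2] at hanc
      exact htadj.ne (anc_antisymm hT z htanc hanc)
    · obtain ⟨Pz, hPz⟩ := exists_path' hT z r.t
      have hmem : r'.s ∈ Pz.support := (anc_iff hT z Pz hPz).1 h
      have hPeq : Pz.dropUntil r'.s hmem = P := path_eq' hT _ _ (hPz.dropUntil hmem) hP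
      have hv : P.getVert 1 ∈ (Pz.dropUntil r'.s hmem).support := by
        rw [hPeq]; exact getVert_mem_support' _ _
      have hanc := anc_of_mem_dropUntil hT z Pz hPz hmem hv
      rw [h1] at hanc
      exact hsadj.ne' (anc_antisymm hT z hsanc hanc)
  · intro hrel
    obtain ⟨P, hP⟩ := exists_path' hT r'.s r.t
    have hne : r'.s ≠ r.t := by
      intro heq
      exact hrel (Or.inr (by rw [← heq]; exact anc_refl hT z r'.s))
    have hlen : 1 ≤ P.length := by
      rcases Nat.eq_zero_or_pos P.length with h0 | h0
      · exact absurd (Walk.eq_of_length_eq_zero h0) hne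
      · exact h0
    refine ⟨P, hP, hlen, ?_, ?_⟩
    · have hadj : T.Adj r'.s (P.getVert 1) := by
        have := P.adj_getVert_succ (i := 0) (by omega)
        rwa [Walk.getVert_zero] at this
      rcases adj_comparable hT z hadj with hdn | hup
      · exfalso
        have hdown : Ancestor T z (P.getVert 0) (P.getVert (0+1)) := by
          rw [Walk.getVert_zero, show (0+1 : ℕ) = 1 from rfl]; exact hdn
        have hch := down_chain hT z hP (j := 0) (by omega) hdown 0 P.length
          (le_refl _) (by omega) (le_refl _)
        rw [Walk.getVert_zero, Walk.getVert_length] at hch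
        exact hrel (Or.inr hch)
      · exact parent_unique hT z hadj.symm hup hsadj.symm hsanc
    · have hadj : T.Adj (P.getVert (P.length - 1)) r.t := by
        have := P.adj_getVert_succ (i := P.length - 1) (by omega)
        rwa [show P.length - 1 + 1 = P.length from by omega, Walk.getVert_length] at this
      rcases adj_comparable hT z hadj with hdn | hup
      · exact parent_unique hT z hadj hdn htadj htanc
      · exfalso
        have hdown : Ancestor T z (P.reverse.getVert 0) (P.reverse.getVert (0+1)) := by
          rw [Walk.getVert_zero, show (0+1 : ℕ) = 1 from rfl, Walk.getVert_reverse]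
          exact hup
        have hch := down_chain hT z hP.reverse (j := 0)
          (by rw [Walk.length_reverse]; omega) hdown 0 P.reverse.length
          (le_refl _) (by omega) (le_refl _)
        rw [Walk.getVert_zero, Walk.getVert_length] at hch
        exact hrel (Or.inl hch)

lemma unimodal_structure (hT : T.IsTree) (z : V) {r : Request T} {m : V}
    (hr : Unimodal T z r) (hm : IsMiddle T z r m) :
    ∃ a b : V, T.Adj m a ∧ T.Adj m b ∧ a ≠ b ∧
      Ancestor T z m a ∧ Ancestor T z m b ∧ Ancestor T z a r.s ∧ Ancestor T z b r.t ∧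
      T.Adj r.s r.sPlus ∧ Ancestor T z r.sPlus r.s ∧
      T.Adj r.tMinus r.t ∧ Ancestor T z r.tMinus r.t ∧
      Ancestor T z m r.s ∧ Ancestor T z m r.t := by
  have hP : r.toWalk.IsPath := r.isPath
  have hlen : 1 ≤ r.toWalk.length := r.one_le_length
  have hexd : ∃ j, j < r.toWalk.length ∧
      Ancestor T z (r.toWalk.getVert j) (r.toWalk.getVert (j+1)) := by
    have hc : ¬ Converging T z r := hr.1
    have hc' : ¬ ∀ i < r.toWalk.length,
        Ancestor T z (r.toWalk.getVert (i+1)) (r.toWalk.getVert i) := hc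
    push_neg at hc'
    obtain ⟨i, hi, hni⟩ := hc'
    exact ⟨i, hi, (adj_comparable hT z (r.toWalk.adj_getVert_succ hi)).resolve_right hni⟩
  classical
  set k := Nat.find hexd with hkdef
  have hk : k < r.toWalk.length ∧
      Ancestor T z (r.toWalk.getVert k) (r.toWalk.getVert (k+1)) := Nat.find_spec hexd
  have hmin : ∀ i, i < k → Ancestor T z (r.toWalk.getVert (i+1)) (r.toWalk.getVert i) := by
    intro i hik
    have hnd := Nat.find_min hexd hik
    push_neg at hnd
    exact (adj_comparable hT z (r.toWalk.adj_getVert_succ (by omega))).resolve_left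
      (hnd (by omega))
  have hk1 : 1 ≤ k := by
    rcases Nat.eq_zero_or_pos k with h0 | h0
    · exfalso
      apply hr.2
      intro i hi
      exact down_arcs hT z hP hk.2 i (by omega) hi
    · exact h0
  have hup' : Ancestor T z (r.toWalk.getVert (k-1+1)) (r.toWalk.getVert (k-1)) :=
    hmin (k-1) (by omega)
  have hpeak : ∀ i, i ≤ r.toWalk.length →
      Ancestor T z (r.toWalk.getVert k) (r.toWalk.getVert i) := by
    intro i hi
    rcases le_or_gt i k with hik | hik
    · exact up_chain hT z hP (j := k-1) (by omega) hup' i k hik (by omega)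
    · exact down_chain hT z hP hk.1 hk.2 k i (le_refl _) (by omega) hi
  obtain ⟨km, hkm_eq, hkm_le⟩ := Walk.mem_support_iff_exists_getVert.1 hm.1
  have h1 : Ancestor T z (r.toWalk.getVert k) m := by
    rw [← hkm_eq]; exact hpeak km hkm_le
  have hmk : r.toWalk.getVert k = m :=
    anc_antisymm hT z h1 (hm.2 _ (getVert_mem_support' r.toWalk k))
  refine ⟨r.toWalk.getVert (k-1), r.toWalk.getVert (k+1), ?_, ?_, ?_, ?_, ?_, ?_, ?_,
    ?_, ?_, ?_, ?_, ?_, ?_⟩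
  · have := r.toWalk.adj_getVert_succ (i := k-1) (by omega)
    rw [show k - 1 + 1 = k from by omega, hmk] at this
    exact this.symm
  · exact hmk ▸ r.toWalk.adj_getVert_succ hk.1
  · intro heq
    have := getVert_inj' hP (i := k-1) (j := k+1) (by omega) (by omega) heq
    omega
  · have := hup'
    rwa [show k - 1 + 1 = k from by omega, hmk] at this
  · exact hmk ▸ hk.2
  · have := up_chain hT z hP (j := k-1) (by omega) hup' 0 (k-1) (by omega) (by omega)
    rwa [Walk.getVert_zero] at this
  · have := down_chain hT z hP hk.1 hk.2 (k+1) r.toWalk.length (by omega) (by omega) (le_refl _)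
    rwa [Walk.getVert_length] at this
  · have := r.toWalk.adj_getVert_succ (i := 0) (by omega)
    rwa [Walk.getVert_zero] at this
  · have := hmin 0 (by omega)
    rwa [Walk.getVert_zero] at this
  · have := r.toWalk.adj_getVert_succ (i := r.toWalk.length - 1) (by omega)
    rwa [show r.toWalk.length - 1 + 1 = r.toWalk.length from by omega,
      Walk.getVert_length] at this
  · have := down_arcs hT z hP hk.2 (r.toWalk.length - 1) (by omega) (by omega)
    rwa [show r.toWalk.length - 1 + 1 = r.toWalk.length from by omega,
      Walk.getVert_length] at this
  · -- Ancestor T z m r.s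
    have h2 := up_chain hT z hP (j := k-1) (by omega) hup' 0 k (by omega) (by omega)
    rw [Walk.getVert_zero, hmk] at h2
    exact h2
  · have h2 := down_chain hT z hP hk.1 hk.2 k r.toWalk.length (le_refl _) (by omega) (le_refl _)
    rw [Walk.getVert_length, hmk] at h2
    exact h2

end Main

/-- Lemma 1(v): a unimodal request `r` and a converging request `r'` do not
interfere iff `m_r` is an ancestor of `t_{r'}` and `t_r` and `s_{r'}` are related. -/
theorem unimodal_conv_not_interfere_iff {V : Type*} (T : SimpleGraph V) (hT : T.IsTree)
    (z : V) (r r' : Request T) (m : V)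
    (hr : Unimodal T z r) (hr' : Converging T z r')
    (hm : IsMiddle T z r m) :
    ¬ Interfere T r r' ↔ Ancestor T z m r'.t ∧ Related T z r.t r'.s := by
  classical
  obtain ⟨a, b, hma, hmb, hab, hanc_ma, hanc_mb, has, hbt, hsadj, hspanc, htadj, htranc,
    hms, hmt⟩ := unimodal_structure hT z hr hm
  have hlen' : 1 ≤ r'.toWalk.length := r'.one_le_length
  have hr'' : ∀ i < r'.toWalk.length,
      Ancestor T z (r'.toWalk.getVert (i+1)) (r'.toWalk.getVert i) := hr'
  have hs'adj : T.Adj r'.s r'.sPlus := by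
    have := r'.toWalk.adj_getVert_succ (i := 0) (by omega)
    rwa [Walk.getVert_zero] at this
  have hs'anc : Ancestor T z r'.sPlus r'.s := by
    have := hr'' 0 (by omega)
    rwa [Walk.getVert_zero] at this
  have ht'adj : T.Adj r'.tMinus r'.t := by
    have := r'.toWalk.adj_getVert_succ (i := r'.toWalk.length - 1) (by omega)
    rwa [show r'.toWalk.length - 1 + 1 = r'.toWalk.length from by omega,
      Walk.getVert_length] at this
  have ht'anc : Ancestor T z r'.t r'.tMinus := by
    have := hr'' (r'.toWalk.length - 1) (by omega)
    rwa [show r'.toWalk.length - 1 + 1 = r'.toWalk.length from by omega,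
      Walk.getVert_length] at this
  have ht'm_s' : Ancestor T z r'.tMinus r'.s := by
    have hch : ∀ i, i ≤ r'.toWalk.length →
        Ancestor T z (r'.toWalk.getVert i) (r'.toWalk.getVert 0) := by
      intro i hi
      induction i with
      | zero => exact anc_refl hT z _
      | succ n IH => exact anc_trans hT z (hr'' n (by omega)) (IH (by omega))
    have h := hch (r'.toWalk.length - 1) (by omega)
    rwa [Walk.getVert_zero] at h
  have hI1 := interferesOn_iff_anc hT z hsadj hspanc ht'adj ht'anc
  have hI2 := interferesOn_conv_iff hT z hs'adj hs'anc htadj htranc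
  constructor
  · intro hni
    have h1 : ¬ Ancestor T z r'.tMinus r.s := fun h => hni (Or.inl (hI1.2 h))
    have h2 : Related T z r.t r'.s := by
      by_contra hc
      exact hni (Or.inr (hI2.2 hc))
    refine ⟨?_, h2⟩
    have h2' : Ancestor T z r.t r'.s ∨ Ancestor T z r'.s r.t := h2
    have ht's' : Ancestor T z r'.t r'.s := anc_trans hT z ht'anc ht'm_s'
    have hcmp : Ancestor T z m r'.t ∨ Ancestor T z r'.t m := by
      rcases h2' with h | h
      · exact anc_comparable hT z (anc_trans hT z hmt h) ht's'
      · exact anc_comparable hT z hmt (anc_trans hT z ht's' h)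
    rcases hcmp with h | h
    · exact h
    · by_cases hne : r'.t = m
      · rw [hne]; exact anc_refl hT z m
      · exfalso
        apply h1
        have hcmp2 : Ancestor T z r'.tMinus m ∨ Ancestor T z m r'.tMinus := by
          rcases h2' with hh | hh
          · exact anc_comparable hT z ht'm_s' (anc_trans hT z hmt hh)
          · exact anc_comparable hT z (anc_trans hT z ht'm_s' hh) hmt
        rcases hcmp2 with h3 | h3
        · exact anc_trans hT z h3 hms
        · rcases anc_sandwich hT z ht'adj.symm ht'anc h3 with heq | hanc
          · rw [← heq]; exact hms
          · exact absurd (anc_antisymm hT z h hanc) hne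
  · rintro ⟨hc1, hc2⟩ hint
    have hint' : InterferesOn T r r' ∨ InterferesOn T r' r := hint
    have hc2' : Ancestor T z r.t r'.s ∨ Ancestor T z r'.s r.t := hc2
    rcases hint' with h | h
    · have hcon : Ancestor T z r'.tMinus r.s := hI1.1 h
      have hm_tm : Ancestor T z m r'.tMinus := anc_trans hT z hc1 ht'anc
      have hfin : Ancestor T z a r'.tMinus → False := by
        intro ha
        have haS : Ancestor T z a r'.s := anc_trans hT z ha ht'm_s'
        rcases hc2' with hh | hh
        · exact hab (children_eq hT z hma hanc_ma hmb hanc_mb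
            (anc_comparable hT z haS (anc_trans hT z hbt hh)))
        · exact hab (children_eq hT z hma hanc_ma hmb hanc_mb
            (anc_comparable hT z (anc_trans hT z haS hh) hbt))
      rcases anc_comparable hT z has hcon with hca | hca
      · exact hfin hca
      · rcases anc_sandwich hT z hma hanc_ma hca with heq | hanc2
        · exact hfin (by rw [heq]; exact anc_refl hT z a)
        · have hem : r'.tMinus = m := anc_antisymm hT z hanc2 hm_tm
          have h2 : m = r'.t := anc_antisymm hT z hc1 (hem ▸ ht'anc)
          exact ht'adj.ne (hem.trans h2)
    · exact (hI2.1 h) hc2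
end

section
/- Let R be a set of requests on a bidirected tree T rooted at a vertex z, and let R^∨ be the set of unimodal requests of R. Then the interference graph I(R^∨,T) is a cobipartite graph. -/
open SimpleGraph

variable {V : Type*}

namespace MyAux

variable {V : Type*} {T : SimpleGraph V}

lemma getVert_mem_support' {u v : V} (p : T.Walk u v) {i : ℕ} (hi : i ≤ p.length) :
    p.getVert i ∈ p.support := Walk.mem_support_iff_exists_getVert.2 ⟨i, rfl, hi⟩

lemma getVert_inj {u v : V} {p : T.Walk u v} (hp : p.IsPath) :
    ∀ {i j : ℕ}, i ≤ p.length → j ≤ p.length → p.getVert i = p.getVert j → i = j := by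
  induction p with
  | nil => intro i j hi hj _; simp only [Walk.length_nil, Nat.le_zero] at hi hj; omega
  | cons h q ih =>
    rw [Walk.cons_isPath_iff] at hp
    intro i j hi hj hij
    match i, j with
    | 0, 0 => rfl
    | 0, (j+1) =>
      exfalso
      rw [Walk.getVert_zero, Walk.getVert_cons_succ] at hij
      exact hp.2 (hij ▸ getVert_mem_support' q (by simpa using hj))
    | (i+1), 0 =>
      exfalso
      rw [Walk.getVert_zero, Walk.getVert_cons_succ] at hij
      exact hp.2 (hij ▸ getVert_mem_support' q (by simpa using hi))
    | (i+1), (j+1) =>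
      rw [Walk.getVert_cons_succ, Walk.getVert_cons_succ] at hij
      have := ih hp.1 (by simpa using hi) (by simpa using hj) hij
      omega

def wtake {u v : V} : (p : T.Walk u v) → (n : ℕ) → T.Walk u (p.getVert n)
  | Walk.nil, _ => Walk.nil
  | Walk.cons _ _, 0 => Walk.nil
  | Walk.cons h q, (n+1) => Walk.cons h (wtake q n)

lemma wtake_length {u v : V} : ∀ (p : T.Walk u v) (n : ℕ), n ≤ p.length → (wtake p n).length = n
  | Walk.nil, n, hn => by simp at hn; simp [wtake, hn]
  | Walk.cons _ _, 0, _ => rfl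
  | Walk.cons h q, (n+1), hn => by
      simpa [wtake] using wtake_length q n (by simpa using hn)

lemma wtake_getVert {u v : V} :
    ∀ (p : T.Walk u v) (n i : ℕ), i ≤ n → (wtake p n).getVert i = p.getVert i
  | Walk.nil, n, i, _ => by simp [wtake]
  | Walk.cons _ _, 0, i, hi => by
      simp at hi; simp [wtake, hi]; rfl
  | Walk.cons h q, (n+1), 0, _ => by simp [wtake]
  | Walk.cons h q, (n+1), (i+1), hi => by
      simpa [wtake, Walk.getVert_cons_succ] using wtake_getVert q n i (by omega)

lemma wtake_support_subset {u v : V} :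
    ∀ (p : T.Walk u v) (n : ℕ), (wtake p n).support ⊆ p.support
  | Walk.nil, n => by simp [wtake]
  | Walk.cons _ _, 0 => by show [_] ⊆ _; simp
  | Walk.cons h q, (n+1) => by
      simp only [wtake, Walk.support_cons]
      exact List.cons_subset_cons _ (wtake_support_subset q n)

lemma wtake_length_le {u v : V} : ∀ (p : T.Walk u v) (n : ℕ), (wtake p n).length ≤ n
  | Walk.nil, n => by simp [wtake]
  | Walk.cons _ _, 0 => by simp [wtake]; rfl
  | Walk.cons h q, (n+1) => by
      simpa [wtake] using wtake_length_le q n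

lemma wtake_isPath {u v : V} {p : T.Walk u v} (hp : p.IsPath) (n : ℕ) :
    (wtake p n).IsPath := by
  induction p generalizing n with
  | nil => exact hp
  | cons h q ih =>
    match n with
    | 0 => simp [wtake]; exact Walk.IsPath.nil
    | (n+1) =>
      rw [Walk.cons_isPath_iff] at hp
      exact (Walk.cons_isPath_iff _ _).2 ⟨ih hp.1 n, fun hm => hp.2 (wtake_support_subset q n hm)⟩

lemma mem_wtake_iff {u v x : V} {p : T.Walk u v} {n : ℕ} (hn : n ≤ p.length) :
    x ∈ (wtake p n).support ↔ ∃ i ≤ n, p.getVert i = x := by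
  rw [Walk.mem_support_iff_exists_getVert]
  constructor
  · rintro ⟨i, hiv, hil⟩
    rw [wtake_length p n hn] at hil
    exact ⟨i, hil, by rw [← wtake_getVert p n i hil]; exact hiv⟩
  · rintro ⟨i, hil, hiv⟩
    exact ⟨i, by rw [wtake_getVert p n i hil]; exact hiv, by rw [wtake_length p n hn]; exact hil⟩


section Tree
variable {V : Type*} {T : SimpleGraph V} (hT : T.IsTree) (z : V)

noncomputable def pth (u v : V) : T.Walk u v := (hT.existsUnique_path u v).exists.choose

lemma pth_isPath (u v : V) : (pth hT u v).IsPath :=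
  (hT.existsUnique_path u v).exists.choose_spec

lemma path_eq {u v : V} (p : T.Walk u v) (hp : p.IsPath) : p = pth hT u v :=
  (hT.existsUnique_path u v).unique hp (pth_isPath hT u v)

open Classical in
noncomputable def meetIdx {u v : V} (w : T.Walk u v) : ℕ :=
  Nat.find (⟨w.length, Or.inl rfl⟩ :
    ∃ j, j = w.length ∨ Ancestor T z (w.getVert j) (w.getVert (j+1)))

lemma meetIdx_le {u v : V} (w : T.Walk u v) : meetIdx z w ≤ w.length := by
  classical
  exact Nat.find_min' _ (Or.inl rfl)

variable {z}
include hT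

lemma anc_iff {x y : V} : Ancestor T z x y ↔ x ∈ (pth hT z y).support := by
  constructor
  · rintro ⟨p, hp, hx⟩; rwa [path_eq hT p hp] at hx
  · intro h; exact ⟨pth hT z y, pth_isPath hT z y, h⟩

lemma anc_refl (y : V) : Ancestor T z y y :=
  ⟨pth hT z y, pth_isPath hT z y, Walk.end_mem_support _⟩

lemma anc_getVert {y : V} {i j : ℕ} (hij : i ≤ j) (hj : j ≤ (pth hT z y).length) :
    Ancestor T z ((pth hT z y).getVert i) ((pth hT z y).getVert j) := by
  refine ⟨wtake (pth hT z y) j, wtake_isPath (pth_isPath hT z y) j, ?_⟩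
  exact (mem_wtake_iff hj).2 ⟨i, hij, rfl⟩

lemma anc_trans {x y w : V} (h1 : Ancestor T z x y) (h2 : Ancestor T z y w) :
    Ancestor T z x w := by
  classical
  rw [anc_iff hT] at h1 h2 ⊢
  have hq : ((pth hT z w).takeUntil y h2).IsPath := (pth_isPath hT z w).takeUntil h2
  have he := path_eq hT _ hq
  rw [← he] at h1
  exact Walk.support_takeUntil_subset _ h2 h1

-- x is an ancestor of y iff x is getVert i of root path
lemma anc_iff_getVert {x y : V} :
    Ancestor T z x y ↔ ∃ i ≤ (pth hT z y).length, (pth hT z y).getVert i = x := by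
  rw [anc_iff hT, Walk.mem_support_iff_exists_getVert]
  exact ⟨fun ⟨n, h1, h2⟩ => ⟨n, h2, h1⟩, fun ⟨n, h1, h2⟩ => ⟨n, h2, h1⟩⟩

lemma anc_antisymm {x y : V} (h1 : Ancestor T z x y) (h2 : Ancestor T z y x) : x = y := by
  obtain ⟨i, hi, hiv⟩ := (anc_iff_getVert hT).1 h1
  -- root path of x is wtake of root path of y
  have hw : (wtake (pth hT z y) i).IsPath := wtake_isPath (pth_isPath hT z y) i
  have h2' := (anc_iff hT).1 h2
  rw [← path_eq hT ((wtake (pth hT z y) i).copy rfl hiv) (by simpa using hw)] at h2'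
  rw [Walk.support_copy, mem_wtake_iff hi] at h2'
  obtain ⟨m, hm, hmv⟩ := h2'
  have : (pth hT z y).getVert m = (pth hT z y).getVert (pth hT z y).length := by
    rw [hmv, Walk.getVert_length]
  have hmn := getVert_inj (pth_isPath hT z y) (le_trans hm hi) le_rfl this
  have : i = (pth hT z y).length := by omega
  rw [← hiv, this, Walk.getVert_length]

lemma anc_total {a b c : V} (ha : Ancestor T z a c) (hb : Ancestor T z b c) :
    Ancestor T z a b ∨ Ancestor T z b a := by
  obtain ⟨i, hi, hiv⟩ := (anc_iff_getVert hT).1 ha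
  obtain ⟨j, hj, hjv⟩ := (anc_iff_getVert hT).1 hb
  rcases le_total i j with h | h
  · left
    have := anc_getVert hT (y := c) h hj
    rwa [hiv, hjv] at this
  · right
    have := anc_getVert hT (y := c) h hi
    rwa [hiv, hjv] at this

lemma adj_anc {u v : V} (h : T.Adj u v) : Ancestor T z u v ∨ Ancestor T z v u := by
  classical
  by_cases hv : v ∈ (pth hT z u).support
  · right; exact (anc_iff hT).2 hv
  · left
    have hp : ((pth hT z u).concat h).IsPath := by
      rw [Walk.isPath_def, Walk.support_concat, List.nodup_append']
      refine ⟨(pth_isPath hT z u).support_nodup, List.nodup_singleton v, ?_⟩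
      intro a ha hav
      rw [List.mem_singleton] at hav
      exact hv (hav ▸ ha)
    rw [anc_iff hT, ← path_eq hT _ hp, Walk.support_concat,
      List.mem_append]
    exact Or.inl (Walk.end_mem_support _)

lemma parent_eq {u v : V} (h : T.Adj u v) (ha : Ancestor T z v u) :
    v = (pth hT z u).getVert ((pth hT z u).length - 1) := by
  obtain ⟨i, hi, hiv⟩ := (anc_iff_getVert hT).1 ha
  have hin : i ≠ (pth hT z u).length := by
    intro hE
    rw [hE, Walk.getVert_length] at hiv
    exact h.ne hiv
  have hil : i < (pth hT z u).length := lt_of_le_of_ne hi hin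
  -- the walk z → v → u
  have hq : (((wtake (pth hT z u) i).copy rfl hiv).concat h.symm).IsPath := by
    rw [Walk.isPath_def, Walk.support_concat, List.nodup_append']
    refine ⟨(show ((wtake (pth hT z u) i).copy rfl hiv).IsPath by
        simpa using wtake_isPath (pth_isPath hT z u) i).support_nodup,
      List.nodup_singleton u, ?_⟩
    intro a ha' hau
    rw [List.mem_singleton] at hau
    rw [Walk.support_copy, mem_wtake_iff hi] at ha'
    obtain ⟨m, hm, hmv⟩ := ha'
    have : (pth hT z u).getVert m = (pth hT z u).getVert (pth hT z u).length := by
      rw [hmv, hau, Walk.getVert_length]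
    have := getVert_inj (pth_isPath hT z u) (le_trans hm hi) le_rfl this
    omega
  have hpe : (((wtake (pth hT z u) i).copy rfl hiv).concat h.symm) = pth hT z u :=
    path_eq hT _ hq
  have hlen : i + 1 = (pth hT z u).length := by
    have := congrArg Walk.length hpe
    rwa [Walk.length_concat, Walk.length_copy, wtake_length (pth hT z u) i hi] at this
  have : (pth hT z u).length - 1 = i := by omega
  rw [this, hiv]

lemma parent_unique {u v w : V} (hv : T.Adj u v) (hav : Ancestor T z v u)
    (hw : T.Adj u w) (haw : Ancestor T z w u) : v = w := by
  rw [parent_eq hT hv hav, parent_eq hT hw haw]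

lemma up_of_lt_meetIdx {u v : V} {w : T.Walk u v} {i : ℕ} (hi : i < meetIdx z w) :
    i < w.length ∧ Ancestor T z (w.getVert (i+1)) (w.getVert i) := by
  classical
  have h := Nat.find_min (⟨w.length, Or.inl rfl⟩ :
    ∃ j, j = w.length ∨ Ancestor T z (w.getVert j) (w.getVert (j+1))) hi
  push_neg at h
  have hil : i < w.length := lt_of_le_of_ne (le_trans (le_of_lt hi) (meetIdx_le z w)) h.1
  refine ⟨hil, ?_⟩
  rcases adj_anc hT (w.adj_getVert_succ hil) with hca | hca
  · exact absurd hca h.2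
  · exact hca

lemma down_of_meetIdx_le {u v : V} {w : T.Walk u v} (hw : w.IsPath) {j : ℕ}
    (hj : meetIdx z w ≤ j) (hjl : j < w.length) :
    Ancestor T z (w.getVert j) (w.getVert (j+1)) := by
  classical
  revert hjl
  induction j, hj using Nat.le_induction with
  | base =>
    intro hjl
    have h := Nat.find_spec (⟨w.length, Or.inl rfl⟩ :
      ∃ j, j = w.length ∨ Ancestor T z (w.getVert j) (w.getVert (j+1)))
    rcases h with h | h
    · rw [show meetIdx z w = Nat.find _ from rfl] at hjl
      omega
    · exact h
  | succ j hj ih =>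
    intro hjl
    have hjl' : j < w.length := by omega
    have hd := ih hjl'
    rcases adj_anc hT (w.adj_getVert_succ hjl) with hca | hca
    · exact hca
    · -- down at j, up at j+1 : contradiction
      exfalso
      have e1 : T.Adj (w.getVert (j+1)) (w.getVert j) := (w.adj_getVert_succ hjl').symm
      have e2 : T.Adj (w.getVert (j+1)) (w.getVert (j+2)) := w.adj_getVert_succ hjl
      have heq := parent_unique hT e1 hd e2 hca
      have := getVert_inj hw (by omega : j ≤ w.length) (by omega : j + 2 ≤ w.length) heq
      omega

-- chains along the up part and the down part
lemma anc_up_chain {u v : V} {w : T.Walk u v} {i j : ℕ} (hij : i ≤ j)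
    (hj : j ≤ meetIdx z w) : Ancestor T z (w.getVert j) (w.getVert i) := by
  induction j with
  | zero =>
    have : i = 0 := by omega
    subst this; exact anc_refl hT _
  | succ j ih =>
    rcases Nat.eq_or_lt_of_le hij with h | h
    · subst h; exact anc_refl hT _
    · have hup := (up_of_lt_meetIdx hT (z := z) (w := w) (by omega : j < meetIdx z w)).2
      exact anc_trans hT hup (ih (by omega) (by omega))

lemma anc_down_chain {u v : V} {w : T.Walk u v} (hw : w.IsPath) {i j : ℕ}
    (hki : meetIdx z w ≤ i) (hij : i ≤ j) (hj : j ≤ w.length) :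
    Ancestor T z (w.getVert i) (w.getVert j) := by
  induction j with
  | zero =>
    have : i = 0 := by omega
    subst this; exact anc_refl hT _
  | succ j ih =>
    rcases Nat.eq_or_lt_of_le hij with h | h
    · subst h; exact anc_refl hT _
    · exact anc_trans hT (ih (by omega) (by omega))
        (down_of_meetIdx_le hT hw (by omega) (by omega))

lemma anc_meet {u v : V} {w : T.Walk u v} (hw : w.IsPath) {i : ℕ} (hil : i ≤ w.length) :
    Ancestor T z (w.getVert (meetIdx z w)) (w.getVert i) := by
  rcases le_total i (meetIdx z w) with h | h
  · exact anc_up_chain hT h (le_refl _)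
  · exact anc_down_chain hT hw (le_refl _) h hil

end Tree

section Req
variable {V : Type*} {T : SimpleGraph V} (hT : T.IsTree) {z : V}

/-- The child of the middle vertex on the source side. -/
noncomputable def srcChild (z : V) (r : Request T) : V :=
  r.toWalk.getVert (meetIdx z r.toWalk - 1)

/-- The child of the middle vertex on the target side. -/
noncomputable def tgtChild (z : V) (r : Request T) : V :=
  r.toWalk.getVert (meetIdx z r.toWalk + 1)

/-- The middle vertex. -/
noncomputable def mid (z : V) (r : Request T) : V :=
  r.toWalk.getVert (meetIdx z r.toWalk)

include hT

lemma midIdx_pos_lt {r : Request T} (hr : Unimodal T z r) :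
    0 < meetIdx z r.toWalk ∧ meetIdx z r.toWalk < r.toWalk.length := by
  obtain ⟨hc, hd⟩ := hr
  rw [Converging] at hc
  rw [Diverging] at hd
  push_neg at hc
  push_neg at hd
  obtain ⟨i, hil, hi⟩ := hc
  obtain ⟨j, hjl, hj⟩ := hd
  constructor
  · -- arc j is not down, hence up, hence j < meetIdx
    by_contra h0
    have h0 : meetIdx z r.toWalk = 0 := by omega
    exact hj (down_of_meetIdx_le hT (z := z) r.isPath (by omega) hjl)
  · -- arc i is not up, hence i is not < meetIdx
    by_contra h0
    exact hi (up_of_lt_meetIdx hT (by omega : i < meetIdx z r.toWalk)).2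

lemma isChild_srcChild {r : Request T} (hr : Unimodal T z r) :
    T.Adj (mid z r) (srcChild z r) ∧ Ancestor T z (mid z r) (srcChild z r) := by
  obtain ⟨hk0, hkl⟩ := midIdx_pos_lt hT hr
  set k := meetIdx z r.toWalk with hk
  constructor
  · have := r.toWalk.adj_getVert_succ (i := k - 1) (by omega)
    rw [show k - 1 + 1 = k by omega] at this
    exact this.symm
  · have := (up_of_lt_meetIdx hT (z := z) (w := r.toWalk) (by omega : k - 1 < k)).2
    rw [show k - 1 + 1 = k by omega] at this
    exact this

lemma isChild_tgtChild {r : Request T} (hr : Unimodal T z r) :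
    T.Adj (mid z r) (tgtChild z r) ∧ Ancestor T z (mid z r) (tgtChild z r) := by
  obtain ⟨hk0, hkl⟩ := midIdx_pos_lt hT hr
  exact ⟨r.toWalk.adj_getVert_succ hkl,
    down_of_meetIdx_le hT (z := z) r.isPath (le_refl _) hkl⟩

lemma srcChild_ne_tgtChild {r : Request T} (hr : Unimodal T z r) :
    srcChild z r ≠ tgtChild z r := by
  obtain ⟨hk0, hkl⟩ := midIdx_pos_lt hT hr
  intro h
  have := getVert_inj r.isPath (by omega : meetIdx z r.toWalk - 1 ≤ r.toWalk.length)
    (by omega : meetIdx z r.toWalk + 1 ≤ r.toWalk.length) h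
  omega

lemma anc_srcChild_s {r : Request T} (hr : Unimodal T z r) :
    Ancestor T z (srcChild z r) r.s := by
  obtain ⟨hk0, hkl⟩ := midIdx_pos_lt hT hr
  have := anc_up_chain hT (z := z) (w := r.toWalk) (i := 0) (j := meetIdx z r.toWalk - 1)
    (by omega) (by omega)
  rwa [Walk.getVert_zero] at this

lemma anc_tgtChild_t {r : Request T} (hr : Unimodal T z r) :
    Ancestor T z (tgtChild z r) r.t := by
  obtain ⟨hk0, hkl⟩ := midIdx_pos_lt hT hr
  have := anc_down_chain hT (z := z) r.isPath (i := meetIdx z r.toWalk + 1) (j := r.toWalk.length)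
    (by omega) (by omega) (le_refl _)
  rwa [Walk.getVert_length] at this

lemma anc_mid_s {r : Request T} (hr : Unimodal T z r) : Ancestor T z (mid z r) r.s := by
  have := anc_meet hT (z := z) (w := r.toWalk) r.isPath (i := 0) (by omega)
  rwa [Walk.getVert_zero] at this

lemma anc_mid_t {r : Request T} (hr : Unimodal T z r) : Ancestor T z (mid z r) r.t := by
  have := anc_meet hT (z := z) (w := r.toWalk) r.isPath (i := r.toWalk.length) (le_refl _)
  rwa [Walk.getVert_length] at this

lemma sPlus_eq_parent {r : Request T} (hr : Unimodal T z r) :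
    r.sPlus = (pth hT z r.s).getVert ((pth hT z r.s).length - 1) := by
  obtain ⟨hk0, hkl⟩ := midIdx_pos_lt hT hr
  have hadj : T.Adj r.s (r.toWalk.getVert 1) := by
    have := r.toWalk.adj_getVert_succ (i := 0) (by omega)
    rwa [Walk.getVert_zero] at this
  have hanc : Ancestor T z (r.toWalk.getVert 1) r.s := by
    have := (up_of_lt_meetIdx hT (z := z) (w := r.toWalk) (by omega : 0 < meetIdx z r.toWalk)).2
    rwa [Walk.getVert_zero] at this
  exact parent_eq hT hadj hanc

lemma tMinus_eq_parent {r : Request T} (hr : Unimodal T z r) :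
    r.tMinus = (pth hT z r.t).getVert ((pth hT z r.t).length - 1) := by
  obtain ⟨hk0, hkl⟩ := midIdx_pos_lt hT hr
  have h1 : r.toWalk.length - 1 + 1 = r.toWalk.length := by omega
  have hadj : T.Adj r.t (r.toWalk.getVert (r.toWalk.length - 1)) := by
    have := r.toWalk.adj_getVert_succ (i := r.toWalk.length - 1) (by omega)
    rw [h1, Walk.getVert_length] at this
    exact this.symm
  have hanc : Ancestor T z (r.toWalk.getVert (r.toWalk.length - 1)) r.t := by
    have := down_of_meetIdx_le hT (z := z) r.isPath (j := r.toWalk.length - 1) (by omega) (by omega)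
    rwa [h1, Walk.getVert_length] at this
  exact parent_eq hT hadj hanc

lemma child_unique {m c c' x : V} (hc : T.Adj m c) (hac : Ancestor T z m c)
    (hc' : T.Adj m c') (hac' : Ancestor T z m c')
    (hx : Ancestor T z c x) (hx' : Ancestor T z c' x) : c = c' := by
  have haux : ∀ {a b : V}, T.Adj m a → Ancestor T z m a → T.Adj m b → Ancestor T z m b →
      Ancestor T z a b → a = b := by
    intro a b ha hma hb hmb hab
    by_contra hne
    obtain ⟨i, hi, hiv⟩ := (anc_iff_getVert hT).1 hab
    have hin : i ≠ (pth hT z b).length := by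
      intro hE
      rw [hE, Walk.getVert_length] at hiv
      exact hne hiv.symm
    have hpar : m = (pth hT z b).getVert ((pth hT z b).length - 1) :=
      parent_eq hT hb.symm hmb
    have ham : Ancestor T z a m := by
      have := anc_getVert hT (z := z) (y := b) (i := i) (j := (pth hT z b).length - 1)
        (by omega : i ≤ (pth hT z b).length - 1) (by omega)
      rwa [hiv, ← hpar] at this
    have := anc_antisymm hT ham hma
    exact ha.ne this.symm
  rcases anc_total hT hx hx' with h | h
  · exact haux hc hac hc' hac' h
  · exact (haux hc' hac' hc hac h).symm

lemma exists_child {m x : V} (hm : Ancestor T z m x) (hne : m ≠ x) :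
    ∃ c, T.Adj m c ∧ Ancestor T z m c ∧ Ancestor T z c x := by
  obtain ⟨i, hi, hiv⟩ := (anc_iff_getVert hT).1 hm
  have hin : i ≠ (pth hT z x).length := by
    intro hE
    rw [hE, Walk.getVert_length] at hiv
    exact hne hiv.symm
  refine ⟨(pth hT z x).getVert (i+1), ?_, ?_, ?_⟩
  · rw [← hiv]; exact (pth hT z x).adj_getVert_succ (by omega)
  · rw [← hiv]; exact anc_getVert hT (by omega) (by omega)
  · have := anc_getVert hT (z := z) (y := x) (i := i+1) (j := (pth hT z x).length) (by omega) (le_refl _)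
    rwa [Walk.getVert_length] at this

lemma interferesOn_of_not_rel {r r' : Request T} (hr : Unimodal T z r)
    (hr' : Unimodal T z r') (h : ¬ Related T z r.s r'.t) : InterferesOn T r r' := by
  have hne : r.s ≠ r'.t := by
    intro hE
    refine h (Or.inl ?_)
    rw [hE]
    exact anc_refl hT (z := z) r'.t
  set Q := pth hT r.s r'.t with hQ
  have hQp : Q.IsPath := pth_isPath hT r.s r'.t
  have hn1 : 1 ≤ Q.length := by
    by_contra hE
    have h0 : Q.length = 0 := by omega
    have := Q.getVert_length
    rw [h0, Walk.getVert_zero] at this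
    exact hne this
  have hkle := meetIdx_le z Q
  have hk0 : meetIdx z Q ≠ 0 := by
    intro hE
    refine h (Or.inl ?_)
    have := anc_meet hT (z := z) (w := Q) hQp (i := Q.length) (le_refl _)
    rwa [hE, Walk.getVert_zero, Walk.getVert_length] at this
  have hkn : meetIdx z Q ≠ Q.length := by
    intro hE
    refine h (Or.inr ?_)
    have := anc_meet hT (z := z) (w := Q) hQp (i := 0) (by omega)
    rwa [hE, Walk.getVert_zero, Walk.getVert_length] at this
  refine ⟨Q, hQp, hn1, ?_, ?_⟩
  · -- first arc goes up
    have hadj : T.Adj r.s (Q.getVert 1) := by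
      have := Q.adj_getVert_succ (i := 0) (by omega)
      rwa [Walk.getVert_zero] at this
    have hanc : Ancestor T z (Q.getVert 1) r.s := by
      have := (up_of_lt_meetIdx hT (z := z) (w := Q) (by omega : 0 < meetIdx z Q)).2
      rwa [Walk.getVert_zero] at this
    rw [parent_eq hT hadj hanc]
    exact (sPlus_eq_parent hT hr).symm
  · -- last arc goes down
    have h1 : Q.length - 1 + 1 = Q.length := by omega
    have hadj : T.Adj r'.t (Q.getVert (Q.length - 1)) := by
      have := Q.adj_getVert_succ (i := Q.length - 1) (by omega)
      rw [h1, Walk.getVert_length] at this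
      exact this.symm
    have hanc : Ancestor T z (Q.getVert (Q.length - 1)) r'.t := by
      have := down_of_meetIdx_le hT (z := z) hQp (j := Q.length - 1) (by omega) (by omega)
      rwa [h1, Walk.getVert_length] at this
    rw [parent_eq hT hadj hanc]
    exact (tMinus_eq_parent hT hr').symm

lemma rel_of_not_interfere {r r' : Request T} (hr : Unimodal T z r)
    (hr' : Unimodal T z r') (h : ¬ Interfere T r r') :
    Related T z r.s r'.t ∧ Related T z r'.s r.t := by
  constructor
  · by_contra hE
    exact h (Or.inl (interferesOn_of_not_rel hT hr hr' hE))
  · by_contra hE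
    exact h (Or.inr (interferesOn_of_not_rel hT hr' hr hE))

lemma mid_eq_aux {r r' : Request T} (hr : Unimodal T z r) (hr' : Unimodal T z r')
    (h1 : Related T z r.s r'.t) (h2 : Related T z r'.s r.t)
    (hanc : Ancestor T z (mid z r) (mid z r')) : mid z r = mid z r' := by
  by_contra hne
  obtain ⟨c, hc, hmc, hcm'⟩ := exists_child hT hanc hne
  have hcs' : Ancestor T z c r'.s := anc_trans hT hcm' (anc_mid_s hT hr')
  have hct' : Ancestor T z c r'.t := anc_trans hT hcm' (anc_mid_t hT hr')
  obtain ⟨hsc_adj, hsc_anc⟩ := isChild_srcChild hT hr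
  obtain ⟨htc_adj, htc_anc⟩ := isChild_tgtChild hT hr
  have hsrc : srcChild z r = c := by
    rcases h1 with h | h
    · exact child_unique hT hsc_adj hsc_anc hc hmc
        (anc_trans hT (anc_srcChild_s hT hr) h) hct'
    · exact child_unique hT hsc_adj hsc_anc hc hmc
        (anc_srcChild_s hT hr) (anc_trans hT hct' h)
  have htgt : tgtChild z r = c := by
    rcases h2 with h | h
    · exact child_unique hT htc_adj htc_anc hc hmc
        (anc_tgtChild_t hT hr) (anc_trans hT hcs' h)
    · exact child_unique hT htc_adj htc_anc hc hmc
        (anc_trans hT (anc_tgtChild_t hT hr) h) hcs'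
  exact srcChild_ne_tgtChild hT hr (hsrc.trans htgt.symm)

lemma mid_eq {r r' : Request T} (hr : Unimodal T z r) (hr' : Unimodal T z r')
    (h1 : Related T z r.s r'.t) (h2 : Related T z r'.s r.t) : mid z r = mid z r' := by
  have hrel : Related T z (mid z r) (mid z r') := by
    rcases h1 with h | h
    · exact anc_total hT (anc_trans hT (anc_mid_s hT hr) h) (anc_mid_t hT hr')
    · exact anc_total hT (anc_mid_s hT hr) (anc_trans hT (anc_mid_t hT hr') h)
  rcases hrel with h | h
  · exact mid_eq_aux hT hr hr' h1 h2 h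
  · exact (mid_eq_aux hT hr' hr h2 h1 h).symm

lemma src_eq_tgt {r r' : Request T} (hr : Unimodal T z r) (hr' : Unimodal T z r')
    (hm : mid z r = mid z r') (h1 : Related T z r.s r'.t) :
    srcChild z r = tgtChild z r' := by
  obtain ⟨hsc_adj, hsc_anc⟩ := isChild_srcChild hT hr
  obtain ⟨htc_adj, htc_anc⟩ := isChild_tgtChild hT hr'
  rw [← hm] at htc_adj htc_anc
  rcases h1 with h | h
  · exact child_unique hT hsc_adj hsc_anc htc_adj htc_anc
      (anc_trans hT (anc_srcChild_s hT hr) h) (anc_tgtChild_t hT hr')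
  · exact child_unique hT hsc_adj hsc_anc htc_adj htc_anc
      (anc_srcChild_s hT hr) (anc_trans hT (anc_tgtChild_t hT hr') h)

end Req
end MyAux

/-- Corollary 4(iii): the interference graph of the unimodal requests of `R`
is a cobipartite graph. -/
theorem unimodal_cobipartite {V : Type*} (T : SimpleGraph V) (hT : T.IsTree)
    (z : V) (R : Set (Request T)) :
    IsCobipartite (interGraph T {r ∈ R | Unimodal T z r}) := by
  classical
  obtain ⟨lt, hwo⟩ : ∃ lt : V → V → Prop, IsWellOrder V lt :=
    ⟨WellOrderingRel, WellOrderingRel.isWellOrder⟩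
  have key : ∀ (x y : ↥{r ∈ R | Unimodal T z r}), ¬ Interfere T x.1 y.1 →
      MyAux.srcChild z x.1 = MyAux.tgtChild z y.1 ∧
      MyAux.srcChild z y.1 = MyAux.tgtChild z x.1 := by
    intro x y hI
    have hx : Unimodal T z x.1 := x.2.2
    have hy : Unimodal T z y.1 := y.2.2
    obtain ⟨h1, h2⟩ := MyAux.rel_of_not_interfere hT hx hy hI
    have hm := MyAux.mid_eq hT hx hy h1 h2
    exact ⟨MyAux.src_eq_tgt hT hx hy hm h1,
      MyAux.src_eq_tgt hT hy hx hm.symm h2⟩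
  refine ⟨{x : ↥{r ∈ R | Unimodal T z r} | lt (MyAux.srcChild z x.1) (MyAux.tgtChild z x.1)},
    ?_, ?_⟩
  · intro x hx y hy hxy
    refine ⟨hxy, ?_⟩
    by_contra hI
    obtain ⟨e1, e2⟩ := key x y hI
    rw [Set.mem_setOf_eq] at hx hy
    rw [← e2] at hx
    rw [← e1] at hy
    exact _root_.irrefl _ (_root_.trans hx hy)
  · intro x hx y hy hxy
    refine ⟨hxy, ?_⟩
    by_contra hI
    obtain ⟨e1, e2⟩ := key x y hI
    rw [Set.mem_compl_iff, Set.mem_setOf_eq] at hx hy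
    have hx' : lt (MyAux.tgtChild z x.1) (MyAux.srcChild z x.1) := by
      rcases trichotomous_of lt (MyAux.srcChild z x.1) (MyAux.tgtChild z x.1) with h | h | h
      · exact absurd h hx
      · exact absurd h (MyAux.srcChild_ne_tgtChild hT x.2.2)
      · exact h
    have hy' : lt (MyAux.tgtChild z y.1) (MyAux.srcChild z y.1) := by
      rcases trichotomous_of lt (MyAux.srcChild z y.1) (MyAux.tgtChild z y.1) with h | h | h
      · exact absurd h hy
      · exact absurd h (MyAux.srcChild_ne_tgtChild hT y.2.2)
      · exact h
    rw [e1] at hx'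
    rw [e2] at hy'
    exact _root_.irrefl _ (_root_.trans hx' hy')
end
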